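/- arXiv:2405.16149 — 9 statements merged into one kernel-verified Lean document; each statement's English description precedes it below -/
import Mathlib

section
/- Every unsatisfiable CNF formula in which every clause has exactly k literals and which contains a variable occurring p times positively and q times negatively has at least 2^k + |q - p| clauses. -/
abbrev Lit := ℕ × Bool

def Lit.neg (l : Lit) : Lit := (l.1, !l.2)

abbrev Clause := Finset Lit

def Clause.nontaut (C : Clause) : Prop := ∀ l ∈ C, Lit.neg l ∉ C

instance (C : Clause) : Decidable (Clause.nontaut C) := by
  unfold Clause.nontaut; infer_instance

abbrev CNF := Finset Clause

def satClause (τ : ℕ → Bool) (C : Clause) : Prop := ∃ l ∈ C, τ l.1 = l.2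

def satCNF (τ : ℕ → Bool) (F : CNF) : Prop := ∀ C ∈ F, satClause τ C

def Satisfiable (F : CNF) : Prop := ∃ τ, satCNF τ F

def occ (F : CNF) (v : ℕ) : CNF := F.filter (fun C => (v, true) ∈ C ∨ (v, false) ∈ C)

def vdeg (F : CNF) (v : ℕ) : ℕ := (occ F v).card

def ldeg (F : CNF) (l : Lit) : ℕ := (F.filter (fun C => l ∈ C)).card

def vars (F : CNF) : Finset ℕ := F.sup (fun C => C.image Prod.fst)

def isKCNF (k : ℕ) (F : CNF) : Prop := ∀ C ∈ F, Clause.nontaut C ∧ C.card = k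

def KS (k s : ℕ) (F : CNF) : Prop := isKCNF k F ∧ ∀ v, vdeg F v ≤ s

def KPQ (k p q : ℕ) (F : CNF) : Prop :=
  isKCNF k F ∧ ∀ v, ldeg F (v, true) ≤ p ∧ ldeg F (v, false) ≤ q

def MinUnsat (F : CNF) : Prop := ¬ Satisfiable F ∧ ∀ C ∈ F, Satisfiable (F.erase C)

instance instDecSatClause (τ : ℕ → Bool) (C : Clause) : Decidable (satClause τ C) := by
  unfold satClause; infer_instance
instance instDecSatCNF (τ : ℕ → Bool) (F : CNF) : Decidable (satCNF τ F) := by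
  unfold satCNF; infer_instance

lemma injOn_fst {C : Clause} (h : Clause.nontaut C) :
    Set.InjOn Prod.fst (C : Set Lit) := by
  rintro ⟨v, s⟩ ha ⟨w, t⟩ hb (hab : v = w)
  subst hab
  by_cases hst : s = t
  · subst hst; rfl
  · exfalso
    have ht : t = !s := by cases s <;> cases t <;> simp_all
    exact h (v, s) ha (by simpa [Lit.neg, ← ht] using hb)

lemma card_filter_inter_eq (W A B : Finset ℕ) (hA : A ⊆ W) (hB : B ⊆ A) :
    (W.powerset.filter (fun σ => σ ∩ A = B)).card = 2 ^ (W.card - A.card) := by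
  rw [← Finset.card_sdiff_of_subset hA, ← Finset.card_powerset]
  apply Finset.card_bij' (fun σ _ => σ \ A) (fun t _ => t ∪ B)
  · intro σ hσ
    simp only [Finset.mem_filter, Finset.mem_powerset] at hσ ⊢
    exact Finset.sdiff_subset_sdiff hσ.1 (Finset.Subset.refl A)
  · intro t ht
    simp only [Finset.mem_powerset] at ht
    simp only [Finset.mem_filter, Finset.mem_powerset]
    constructor
    · exact Finset.union_subset (ht.trans Finset.sdiff_subset) (hB.trans hA)
    · ext v
      simp only [Finset.mem_inter, Finset.mem_union]
      constructor
      · rintro ⟨hv1 | hv1, hv2⟩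
        · exact absurd hv2 (Finset.mem_sdiff.mp (ht hv1)).2
        · exact hv1
      · intro hv; exact ⟨Or.inr hv, hB hv⟩
  · intro σ hσ
    simp only [Finset.mem_filter, Finset.mem_powerset] at hσ
    have := hσ.2
    ext v
    have hv := Finset.ext_iff.mp this v
    simp only [Finset.mem_inter] at hv
    simp only [Finset.mem_union, Finset.mem_sdiff]
    by_cases hvA : v ∈ A <;> tauto
  · intro t ht
    simp only [Finset.mem_powerset] at ht
    ext v
    simp only [Finset.mem_union, Finset.mem_sdiff]
    constructor
    · rintro ⟨hv1 | hv1, hv2⟩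
      · exact hv1
      · exact absurd (hB hv1) hv2
    · intro hv
      exact ⟨Or.inl hv, (Finset.mem_sdiff.mp (ht hv)).2⟩

lemma main_count (k : ℕ) (F : CNF) (x : ℕ) (b : Bool)
    (hF : isKCNF k F) (hunsat : ¬ Satisfiable F)
    (h : F.card + ldeg F (x, !b) < 2 ^ k + ldeg F (x, b)) : False := by
  set n := (vars F).sup id + x + k + 1 with hn
  set W : Finset ℕ := (Finset.range n).erase x with hWdef
  have hxn : x < n := by omega
  have hWcard : W.card = n - 1 := by
    rw [hWdef, Finset.card_erase_of_mem (Finset.mem_range.mpr hxn), Finset.card_range]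
  have hNk : k ≤ W.card := by omega
  -- the truth assignment family
  set τ : Finset ℕ → ℕ → Bool := fun σ v => if v = x then b else decide (v ∈ σ) with hτ
  -- per-clause variable sets
  set A : Clause → Finset ℕ := fun C => (C.filter (fun l => l.1 ≠ x)).image Prod.fst with hA
  set B : Clause → Finset ℕ :=
    fun C => (C.filter (fun l => l.1 ≠ x ∧ l.2 = false)).image Prod.fst with hB
  have hvarlt : ∀ C ∈ F, ∀ l ∈ C, l.1 < n := by
    intro C hC l hl
    have h1 : l.1 ∈ vars F := by
      rw [vars, Finset.mem_sup]
      exact ⟨C, hC, Finset.mem_image_of_mem _ hl⟩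
    have h2 : l.1 ≤ (vars F).sup id := Finset.le_sup (f := id) h1
    omega
  have hAW : ∀ C ∈ F, A C ⊆ W := by
    intro C hC v hv
    rw [hA] at hv
    simp only [Finset.mem_image, Finset.mem_filter] at hv
    obtain ⟨l, ⟨hlC, hlx⟩, rfl⟩ := hv
    rw [hWdef]
    exact Finset.mem_erase.mpr ⟨hlx, Finset.mem_range.mpr (hvarlt C hC l hlC)⟩
  have hBA : ∀ C, B C ⊆ A C := by
    intro C
    rw [hA, hB]
    apply Finset.image_subset_image
    intro l hl
    simp only [Finset.mem_filter] at hl ⊢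
    exact ⟨hl.1, hl.2.1⟩
  -- characterization of falsification
  have hchar : ∀ C ∈ F, (x, b) ∉ C → ∀ σ : Finset ℕ,
      (¬ satClause (τ σ) C ↔ σ ∩ A C = B C) := by
    intro C hC hxb σ
    have hinj := injOn_fst (hF C hC).1
    rw [satClause]
    push_neg
    constructor
    · intro hfal
      ext v
      simp only [Finset.mem_inter, hA, hB, Finset.mem_image, Finset.mem_filter]
      constructor
      · rintro ⟨hvσ, l, ⟨hlC, hlx⟩, rfl⟩
        refine ⟨l, ⟨hlC, hlx, ?_⟩, rfl⟩
        have hne := hfal l hlC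
        rw [hτ] at hne
        simp only [if_neg hlx, decide_eq_true_eq] at hne
        simp only [decide_eq_true (show l.1 ∈ σ from hvσ)] at hne
        cases h2 : l.2
        · rfl
        · exact absurd h2.symm hne
      · rintro ⟨l, ⟨hlC, hlx, hl2⟩, rfl⟩
        have hne := hfal l hlC
        rw [hτ] at hne
        simp only [if_neg hlx, hl2] at hne
        have hmem : l.1 ∈ σ := by
          by_contra hcon
          simp [hcon] at hne
        exact ⟨hmem, l, ⟨hlC, hlx⟩, rfl⟩
    · intro heq l hlC
      simp only [hτ]
      by_cases hlx : l.1 = x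
      · rw [if_pos hlx]
        intro hbl
        apply hxb
        have : l = (x, b) := by
          rcases l with ⟨v, s⟩
          simp_all
        exact this ▸ hlC
      · rw [if_neg hlx]
        have hlA : l.1 ∈ A C := by
          rw [hA]; exact Finset.mem_image_of_mem _ (Finset.mem_filter.mpr ⟨hlC, hlx⟩)
        cases h2 : l.2
        · -- need decide (l.1 ∈ σ) ≠ false, i.e. l.1 ∈ σ
          have hlB : l.1 ∈ B C := by
            rw [hB]
            exact Finset.mem_image_of_mem _ (Finset.mem_filter.mpr ⟨hlC, hlx, h2⟩)
          rw [← heq] at hlB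
          simp [Finset.mem_inter.mp hlB |>.1]
        · -- need decide (l.1 ∈ σ) ≠ true, i.e. l.1 ∉ σ
          intro hcon
          simp only [decide_eq_true_eq] at hcon
          have hlB : l.1 ∈ B C := by
            rw [← heq]; exact Finset.mem_inter.mpr ⟨hcon, hlA⟩
          rw [hB] at hlB
          simp only [Finset.mem_image, Finset.mem_filter] at hlB
          obtain ⟨l', ⟨hl'C, _, hl'2⟩, hl'1⟩ := hlB
          have : l' = l := hinj hl'C hlC hl'1
          rw [this] at hl'2
          rw [h2] at hl'2
          exact Bool.noConfusion hl'2
  -- the count per clause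
  have hcount : ∀ C ∈ F, (x, b) ∉ C →
      ((W.powerset.filter (fun σ => ¬ satClause (τ σ) C)).card = 2 ^ (W.card - (A C).card)) := by
    intro C hC hxb
    rw [Finset.filter_congr (fun σ _ => hchar C hC hxb σ)]
    exact card_filter_inter_eq W (A C) (B C) (hAW C hC) (hBA C)
  -- cardinality of A C
  have hAcard1 : ∀ C ∈ F, (x, !b) ∈ C → (A C).card = k - 1 := by
    intro C hC hxb
    have hnt := (hF C hC).1
    have hxbb : (x, b) ∉ C := by
      have := hnt (x, !b) hxb
      simpa [Lit.neg] using this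
    have hfe : C.filter (fun l => l.1 ≠ x) = C.erase (x, !b) := by
      ext l
      simp only [Finset.mem_filter, Finset.mem_erase]
      constructor
      · rintro ⟨hlC, hlx⟩
        refine ⟨?_, hlC⟩
        intro hl; rw [hl] at hlx; exact hlx rfl
      · rintro ⟨hlne, hlC⟩
        refine ⟨hlC, ?_⟩
        intro hlx
        apply hlne
        rcases l with ⟨v, s⟩
        simp only at hlx
        subst hlx
        cases hb2 : b <;> cases hs : s <;> simp_all
    rw [hA]
    simp only
    rw [hfe, Finset.card_image_of_injOn
      (Set.InjOn.mono (by intro l hl; exact Finset.mem_of_mem_erase hl) (injOn_fst hnt)),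
      Finset.card_erase_of_mem hxb, (hF C hC).2]
  have hAcard2 : ∀ C ∈ F, (x, b) ∉ C → (x, !b) ∉ C → (A C).card = k := by
    intro C hC h1 h2
    have hnt := (hF C hC).1
    have hfe : C.filter (fun l => l.1 ≠ x) = C := by
      apply Finset.filter_true_of_mem
      intro l hl hlx
      rcases l with ⟨v, s⟩
      simp only at hlx
      subst hlx
      cases hs : s <;> cases hb2 : b <;> simp_all
    rw [hA]
    simp only
    rw [hfe, Finset.card_image_of_injOn (injOn_fst hnt), (hF C hC).2]
  -- partition of the formula
  set F1 := F.filter (fun C => (x, !b) ∈ C) with hF1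
  set F2 := F.filter (fun C => (x, b) ∉ C ∧ (x, !b) ∉ C) with hF2
  set Fb := F.filter (fun C => (x, b) ∈ C) with hFb
  have hdisj : Disjoint F1 F2 := by
    rw [Finset.disjoint_left]
    intro C h1 h2
    rw [hF1, Finset.mem_filter] at h1
    rw [hF2, Finset.mem_filter] at h2
    exact h2.2.2 h1.2
  have hF1card : F1.card = ldeg F (x, !b) := rfl
  have hFbcard : Fb.card = ldeg F (x, b) := rfl
  have hpart : Fb.card + (F1.card + F2.card) = F.card := by
    have e1 : Fb.card + (F.filter (fun C => (x, b) ∉ C)).card = F.card :=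
      Finset.card_filter_add_card_filter_not _
    have e2 : F.filter (fun C => (x, b) ∉ C) = F1 ∪ F2 := by
      ext C
      simp only [Finset.mem_filter, Finset.mem_union, hF1, hF2]
      constructor
      · rintro ⟨hC, hb1⟩
        by_cases h2 : (x, !b) ∈ C
        · exact Or.inl ⟨hC, h2⟩
        · exact Or.inr ⟨hC, hb1, h2⟩
      · rintro (⟨hC, h2⟩ | ⟨hC, h1, _⟩)
        · refine ⟨hC, ?_⟩
          have := (hF C hC).1 (x, !b) h2
          simpa [Lit.neg] using this
        · exact ⟨hC, h1⟩
    rw [e2, Finset.card_union_of_disjoint hdisj] at e1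
    exact e1
  -- the set of bad assignments
  set Bad := W.powerset.filter (fun σ => ¬ satCNF (τ σ) F) with hBad
  have hsub : Bad ⊆ (F1 ∪ F2).biUnion
      (fun C => W.powerset.filter (fun σ => ¬ satClause (τ σ) C)) := by
    intro σ hσ
    rw [hBad, Finset.mem_filter] at hσ
    obtain ⟨hσW, hσn⟩ := hσ
    rw [satCNF] at hσn
    push_neg at hσn
    obtain ⟨C, hC, hCn⟩ := hσn
    have hxbC : (x, b) ∉ C := by
      intro hmem
      exact hCn ⟨(x, b), hmem, by simp [hτ]⟩
    refine Finset.mem_biUnion.mpr ⟨C, ?_, Finset.mem_filter.mpr ⟨hσW, hCn⟩⟩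
    by_cases h2 : (x, !b) ∈ C
    · exact Finset.mem_union_left _ (Finset.mem_filter.mpr ⟨hC, h2⟩)
    · exact Finset.mem_union_right _ (Finset.mem_filter.mpr ⟨hC, hxbC, h2⟩)
  have s1 : ∀ C ∈ F1, (W.powerset.filter (fun σ => ¬ satClause (τ σ) C)).card
      = 2 ^ (W.card - k + 1) := by
    intro C hC
    rw [hF1, Finset.mem_filter] at hC
    have hxbC : (x, b) ∉ C := by
      have := (hF C hC.1).1 (x, !b) hC.2
      simpa [Lit.neg] using this
    have hk1 : 1 ≤ k := by
      have := (hF C hC.1).2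
      have hpos : 0 < C.card := Finset.card_pos.mpr ⟨_, hC.2⟩
      omega
    rw [hcount C hC.1 hxbC, hAcard1 C hC.1 hC.2]
    congr 1
    omega
  have s2 : ∀ C ∈ F2, (W.powerset.filter (fun σ => ¬ satClause (τ σ) C)).card
      = 2 ^ (W.card - k) := by
    intro C hC
    rw [hF2, Finset.mem_filter] at hC
    rw [hcount C hC.1 hC.2.1, hAcard2 C hC.1 hC.2.1 hC.2.2]
  have hsum : Bad.card ≤ F1.card * 2 ^ (W.card - k + 1) + F2.card * 2 ^ (W.card - k) := by
    have h1 := Finset.card_le_card hsub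
    have h2 := Finset.card_biUnion_le (s := F1 ∪ F2)
      (t := fun C => W.powerset.filter (fun σ => ¬ satClause (τ σ) C))
    rw [Finset.sum_union hdisj, Finset.sum_congr rfl s1, Finset.sum_congr rfl s2] at h2
    simp only [Finset.sum_const, smul_eq_mul] at h2
    exact h1.trans h2
  have hkey : 2 * F1.card + F2.card < 2 ^ k := by omega
  have hlt : Bad.card < 2 ^ W.card := by
    have e0 : 2 ^ W.card = 2 ^ k * 2 ^ (W.card - k) := by
      rw [← pow_add]
      congr 1
      omega
    have e1 : F1.card * 2 ^ (W.card - k + 1) + F2.card * 2 ^ (W.card - k)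
        = (2 * F1.card + F2.card) * 2 ^ (W.card - k) := by
      rw [pow_succ]
      ring
    rw [e0]
    calc Bad.card ≤ _ := hsum
    _ = (2 * F1.card + F2.card) * 2 ^ (W.card - k) := e1
    _ < 2 ^ k * 2 ^ (W.card - k) :=
        mul_lt_mul_of_pos_right hkey (by positivity)
  have hfull : ¬ (W.powerset ⊆ Bad) := fun hs => by
    have := Finset.card_le_card hs
    rw [Finset.card_powerset] at this
    omega
  rw [Finset.not_subset] at hfull
  obtain ⟨σ, hσW, hσB⟩ := hfull
  apply hunsat
  refine ⟨τ σ, ?_⟩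
  by_contra hns
  exact hσB (Finset.mem_filter.mpr ⟨hσW, hns⟩)

theorem stmt0 (k p q : ℕ) (F : CNF) (x : ℕ)
    (hF : isKCNF k F) (hunsat : ¬ Satisfiable F)
    (hp : ldeg F (x, true) = p) (hq : ldeg F (x, false) = q) :
    (2 : ℤ) ^ k + |(q : ℤ) - (p : ℤ)| ≤ (F.card : ℤ) := by
  by_contra hcon
  push_neg at hcon
  rcases le_total p q with hpq | hpq
  · apply main_count k F x false hF hunsat
    rw [abs_of_nonneg (by
      have : (p : ℤ) ≤ q := by exact_mod_cast hpq
      omega)] at hcon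
    show F.card + ldeg F (x, !false) < 2 ^ k + ldeg F (x, false)
    simp only [Bool.not_false]
    rw [hp, hq]
    zify
    linarith [hcon]
  · apply main_count k F x true hF hunsat
    rw [abs_of_nonpos (by
      have : (q : ℤ) ≤ p := by exact_mod_cast hpq
      omega)] at hcon
    show F.card + ldeg F (x, !true) < 2 ^ k + ldeg F (x, true)
    simp only [Bool.not_true]
    rw [hp, hq]
    zify
    linarith [hcon]
end

section
/- Every minimally unsatisfiable CNF formula has positive deficiency, i.e., strictly more clauses than variables. -/
lemma vars_union (S T : CNF) : vars (S ∪ T) = vars S ∪ vars T := Finset.sup_union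

lemma mem_vars_of {F : CNF} {C : Clause} (hC : C ∈ F) {l : Lit} (hl : l ∈ C) :
    l.1 ∈ vars F :=
  Finset.le_sup (f := fun C : Clause => C.image Prod.fst) hC
    (Finset.mem_image.mpr ⟨l, hl, rfl⟩)

theorem stmt3 (F : CNF) (hnt : ∀ C ∈ F, Clause.nontaut C) (h : MinUnsat F) :
    (vars F).card < F.card := by
  classical
  by_contra hcon
  push_neg at hcon
  suffices hs : Satisfiable F by exact absurd hs h.1
  rcases Finset.eq_empty_or_nonempty F with rfl | hFne
  · exact ⟨fun _ => true, fun C hC => absurd hC (Finset.notMem_empty C)⟩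
  set d : CNF → ℤ := fun S => (S.card : ℤ) - ((vars S).card : ℤ) with hd
  have hPne : (F.powerset.filter (· ≠ F)).Nonempty :=
    ⟨∅, by simp [Finset.mem_filter, (hFne.ne_empty).symm]⟩
  obtain ⟨S, hSmem, hSmax⟩ := (F.powerset.filter (· ≠ F)).exists_max_image d hPne
  have hSss : S ⊆ F := Finset.mem_powerset.mp (Finset.mem_filter.mp hSmem).1
  have hSne : S ≠ F := (Finset.mem_filter.mp hSmem).2
  have h0 : (0 : ℤ) ≤ d S := by
    have := hSmax ∅ (by simp [Finset.mem_filter, (hFne.ne_empty).symm])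
    simpa [hd, vars] using this
  have hmax : ∀ T ⊆ F, d T ≤ d S := by
    intro T hT
    by_cases hTF : T = F
    · subst hTF
      have hdF : d T ≤ 0 := sub_nonpos.mpr (by exact_mod_cast hcon)
      exact hdF.trans h0
    · exact hSmax T (Finset.mem_filter.mpr ⟨Finset.mem_powerset.mpr hT, hTF⟩)
  set R := F \ S with hR
  -- Hall's condition
  have hHall : ∀ A : Finset {C // C ∈ R},
      A.card ≤ (A.biUnion (fun C => (C.1.image Prod.fst) \ vars S)).card := by
    intro A
    set T := A.image Subtype.val with hT
    have hTR : T ⊆ R := by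
      intro C hC
      obtain ⟨c, _, rfl⟩ := Finset.mem_image.mp hC
      exact c.2
    have hcardT : T.card = A.card := Finset.card_image_of_injective _ Subtype.val_injective
    have hdisj : Disjoint S T := Finset.disjoint_left.mpr
      (fun a ha hTa => (Finset.mem_sdiff.mp (hTR hTa)).2 ha)
    have hkey : d (S ∪ T) ≤ d S :=
      hmax _ (Finset.union_subset hSss (hTR.trans (Finset.sdiff_subset)))
    have hc : (S ∪ T).card = S.card + T.card := Finset.card_union_of_disjoint hdisj
    have hv : vars (S ∪ T) = vars S ∪ vars T := vars_union S T
    have hv2 : (vars T \ vars S).card + (vars S).card = (vars S ∪ vars T).card := by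
      rw [Finset.union_comm]
      exact Finset.card_sdiff_add_card (vars T) (vars S)
    have hTle : T.card ≤ (vars T \ vars S).card := by
      have h1 : ((S ∪ T).card : ℤ) - ((vars (S ∪ T)).card : ℤ) ≤
          (S.card : ℤ) - ((vars S).card : ℤ) := hkey
      rw [hc, hv, ← hv2] at h1
      push_cast at h1
      omega
    have hbU : A.biUnion (fun C => (C.1.image Prod.fst) \ vars S) = vars T \ vars S := by
      ext v
      simp only [Finset.mem_biUnion, Finset.mem_sdiff, vars, Finset.mem_sup, hT,
        Finset.mem_image]
      constructor
      · rintro ⟨c, hc, hv1, hv2⟩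
        exact ⟨⟨c.1, ⟨c, hc, rfl⟩, hv1⟩, hv2⟩
      · rintro ⟨⟨C, ⟨c, hc, rfl⟩, hv1⟩, hv2⟩
        exact ⟨c, hc, hv1, hv2⟩
    rw [hbU, ← hcardT]
    exact hTle
  obtain ⟨f, hfinj, hf⟩ :=
    (Finset.all_card_le_biUnion_card_iff_exists_injective
      (fun C : {C // C ∈ R} => (C.1.image Prod.fst) \ vars S)).mp hHall
  -- a satisfying assignment for S
  have hSssF : S ⊂ F := lt_of_le_of_ne hSss hSne
  obtain ⟨C₀, hC₀F, hC₀S⟩ := Finset.exists_of_ssubset hSssF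
  obtain ⟨τ₂, hτ₂⟩ := h.2 C₀ hC₀F
  have hτ₂S : ∀ C ∈ S, satClause τ₂ C := by
    intro C hC
    exact hτ₂ C (Finset.mem_erase.mpr ⟨fun e => hC₀S (e ▸ hC), hSss hC⟩)
  -- the combined assignment
  set τ : ℕ → Bool := fun v =>
    if v ∈ vars S then τ₂ v
    else if hv : ∃ C : {C // C ∈ R}, f C = v then
      (if ((v, true) : Lit) ∈ (Classical.choose hv).1 then true else false)
    else true with hτ
  refine ⟨τ, fun C hC => ?_⟩
  by_cases hCS : C ∈ S
  · obtain ⟨l, hl, he⟩ := hτ₂S C hCS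
    refine ⟨l, hl, ?_⟩
    have : l.1 ∈ vars S := mem_vars_of hCS hl
    simp [hτ, this, he]
  · have hCR : C ∈ R := Finset.mem_sdiff.mpr ⟨hC, hCS⟩
    set c : {C // C ∈ R} := ⟨C, hCR⟩ with hcdef
    have hfc := hf c
    rw [Finset.mem_sdiff] at hfc
    obtain ⟨hv1, hv2⟩ := hfc
    set v := f c with hvdef
    have hE : ∃ C' : {C // C ∈ R}, f C' = v := ⟨c, rfl⟩
    have hch : Classical.choose hE = c := hfinj (Classical.choose_spec hE)
    have hτv : τ v = (if ((v, true) : Lit) ∈ C then true else false) := by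
      rw [hτ]
      simp only []
      rw [if_neg hv2, dif_pos hE, hch]
    obtain ⟨l, hl, hl1⟩ := Finset.mem_image.mp hv1
    by_cases hb : ((v, true) : Lit) ∈ C
    · exact ⟨(v, true), hb, by rw [hτv, if_pos hb]⟩
    · have hlf : l = (v, false) := by
        rcases Bool.eq_false_or_eq_true l.2 with h2 | h2
        · exact absurd (by rw [← hl1, ← h2]; exact hl) hb
        · rw [← hl1, ← h2]
      refine ⟨(v, false), hlf ▸ hl, by rw [hτv, if_neg hb]⟩
end

section
/- If a clause C is blocked in a CNF formula F and F is satisfiable, then F ∪ {C} is satisfiable. -/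
def BlockedOn (F : CNF) (C : Clause) (x : Lit) : Prop :=
  x ∈ C ∧ ∀ C' ∈ F, Lit.neg x ∈ C' → ∃ y : Lit, y.1 ≠ x.1 ∧ y ∈ C ∧ Lit.neg y ∈ C'

def Blocked (F : CNF) (C : Clause) : Prop := ∃ x, BlockedOn F C x

theorem stmt4 (F : CNF) (C : Clause) (hb : Blocked F C) (hsat : Satisfiable F) :
    Satisfiable (insert C F) := by
  obtain ⟨x, hxC, hbl⟩ := hb
  obtain ⟨τ, hτ⟩ := hsat
  by_cases hC : satClause τ C
  · exact ⟨τ, fun D hD => by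
      rcases Finset.mem_insert.mp hD with rfl | hD
      · exact hC
      · exact hτ D hD⟩
  · have hC : ∀ l ∈ C, τ l.1 ≠ l.2 := fun l hl h => hC ⟨l, hl, h⟩
    refine ⟨fun v => if v = x.1 then x.2 else τ v, fun D hD => ?_⟩
    have hτx : τ x.1 = !x.2 := by
      have := hC x hxC
      cases h : τ x.1 <;> cases h2 : x.2 <;> simp_all
    rcases Finset.mem_insert.mp hD with rfl | hD
    · exact ⟨x, hxC, by simp⟩
    · obtain ⟨l, hlD, hl⟩ := hτ D hD
      by_cases hv : l.1 = x.1
      · have hlneg : l = Lit.neg x := by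
          have : l.2 = !x.2 := by rw [← hl, hv, hτx]
          exact Prod.ext hv this
        obtain ⟨y, hy1, hyC, hyD⟩ := hbl D hD (hlneg ▸ hlD)
        refine ⟨Lit.neg y, hyD, ?_⟩
        have := hC y hyC
        simp only [Lit.neg, if_neg hy1]
        cases h : τ y.1 <;> cases h2 : y.2 <;> simp_all
      · exact ⟨l, hlD, by simpa [hv] using hl⟩
end

section
/- For any CNF formula F and variable x, the formula DP_x(F), obtained by removing all clauses containing x or ¬x and adding all non-tautological resolvents on x, is logically equivalent to ∃x F; in particular, F is satisfiable if and only if DP_x(F) is satisfiable. -/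
def dpResolvent (x : ℕ) (C D : Clause) : Clause := (C ∪ D) \ {(x, true), (x, false)}

def DP (F : CNF) (x : ℕ) : CNF :=
  F.filter (fun C => (x, true) ∉ C ∧ (x, false) ∉ C) ∪
    ((F ×ˢ F).filter (fun p => (x, true) ∈ p.1 ∧ (x, false) ∈ p.2 ∧
        Clause.nontaut (dpResolvent x p.1 p.2))).image (fun p => dpResolvent x p.1 p.2)

lemma mem_res {x : ℕ} {C D : Clause} {l : Lit} :
    l ∈ dpResolvent x C D ↔ (l ∈ C ∨ l ∈ D) ∧ l ≠ (x, true) ∧ l ≠ (x, false) := by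
  simp [dpResolvent, Finset.mem_sdiff, Finset.mem_union, not_or]

lemma var_cases {x : ℕ} {l : Lit} (h : l.1 = x) : l = (x, true) ∨ l = (x, false) := by
  obtain ⟨v, b⟩ := l
  cases b <;> simp_all

lemma ne_var {x : ℕ} {l : Lit} (h1 : l ≠ (x, true)) (h2 : l ≠ (x, false)) : l.1 ≠ x :=
  fun h => (var_cases h).elim h1 h2

theorem stmt6 (F : CNF) (x : ℕ) (hnt : ∀ C ∈ F, Clause.nontaut C) :
    (∀ τ : ℕ → Bool, satCNF τ (DP F x) ↔ ∃ b : Bool, satCNF (Function.update τ x b) F) ∧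
    (Satisfiable F ↔ Satisfiable (DP F x)) := by
  have main : ∀ τ : ℕ → Bool, satCNF τ (DP F x) ↔ ∃ b : Bool, satCNF (Function.update τ x b) F := by
    intro τ
    constructor
    · intro h
      by_cases htrue : satCNF (Function.update τ x true) F
      · exact ⟨true, htrue⟩
      · refine ⟨false, ?_⟩
        simp only [satCNF, not_forall] at htrue
        obtain ⟨D, hDF, hDns⟩ := htrue
        have hDx : (x, false) ∈ D := by
          by_contra hx
          have hDt : (x, true) ∉ D := by
            intro hm
            exact hDns ⟨(x, true), hm, by simp [Function.update_self]⟩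
          have : D ∈ DP F x := by
            simp only [DP, Finset.mem_union, Finset.mem_filter]
            exact Or.inl ⟨hDF, hDt, hx⟩
          obtain ⟨l, hlD, hlτ⟩ := h D this
          have hvar : l.1 ≠ x := by
            intro hv
            rcases var_cases hv with h' | h' <;> subst h' <;> [exact hDt hlD; exact hx hlD]
          exact hDns ⟨l, hlD, by rw [Function.update_of_ne hvar]; exact hlτ⟩
        have hDt : (x, true) ∉ D := by
          have := hnt D hDF (x, false) hDx
          simpa [Lit.neg] using this
        have hDfalse : ∀ l ∈ D, l ≠ (x, false) → l.1 ≠ x ∧ τ l.1 ≠ l.2 := by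
          intro l hl hne
          have hvar : l.1 ≠ x := by
            intro hv
            rcases var_cases hv with h' | h' <;> [exact hDt (h' ▸ hl); exact hne h']
          refine ⟨hvar, fun heq => hDns ⟨l, hl, ?_⟩⟩
          rw [Function.update_of_ne hvar]; exact heq
        intro C hCF
        by_cases hCf : (x, false) ∈ C
        · exact ⟨(x, false), hCf, by simp [Function.update_self]⟩
        by_cases hCt : (x, true) ∈ C
        · -- resolvent case
          by_cases hR : Clause.nontaut (dpResolvent x C D)
          · have hmem : dpResolvent x C D ∈ DP F x := by
              simp only [DP, Finset.mem_union, Finset.mem_image, Finset.mem_filter,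
                Finset.mem_product]
              exact Or.inr ⟨(C, D), ⟨⟨hCF, hDF⟩, hCt, hDx, hR⟩, rfl⟩
            obtain ⟨l, hlR, hlτ⟩ := h _ hmem
            rw [mem_res] at hlR
            obtain ⟨hor, h1, h2⟩ := hlR
            have hvar := ne_var h1 h2
            rcases hor with hlC | hlD
            · exact ⟨l, hlC, by rw [Function.update_of_ne hvar]; exact hlτ⟩
            · exact absurd hlτ (hDfalse l hlD h2).2
          · simp only [Clause.nontaut, not_forall, not_not] at hR
            obtain ⟨l, hlR, hnlR⟩ := hR
            rw [mem_res] at hlR hnlR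
            obtain ⟨hor, h1, h2⟩ := hlR
            obtain ⟨hor', _, _⟩ := hnlR
            have hvar := ne_var h1 h2
            rcases hor with hlC | hlD <;> rcases hor' with hnC | hnD
            · exact absurd hnC (hnt C hCF l hlC)
            · -- l ∈ C, neg l ∈ D
              have hne : Lit.neg l ≠ (x, false) := by
                intro h'; apply hvar
                have : (Lit.neg l).1 = x := by rw [h']
                simpa [Lit.neg] using this
              have := (hDfalse _ hnD hne).2
              simp only [Lit.neg] at this
              have hτ : τ l.1 = l.2 := by
                cases hb : l.2 <;> cases ht : τ l.1 <;> simp_all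
              exact ⟨l, hlC, by rw [Function.update_of_ne hvar]; exact hτ⟩
            · -- l ∈ D, neg l ∈ C
              have hτ : τ l.1 ≠ l.2 := (hDfalse l hlD h2).2
              refine ⟨Lit.neg l, hnC, ?_⟩
              have : (Lit.neg l).1 = l.1 := rfl
              rw [this, Function.update_of_ne hvar]
              simp only [Lit.neg]
              cases hb : l.2 <;> cases ht : τ l.1 <;> simp_all
            · exact absurd hnD (hnt D hDF l hlD)
        · -- no x-literals in C
          have : C ∈ DP F x := by
            simp only [DP, Finset.mem_union, Finset.mem_filter]
            exact Or.inl ⟨hCF, hCt, hCf⟩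
          obtain ⟨l, hlC, hlτ⟩ := h C this
          have hvar : l.1 ≠ x := by
            intro hv
            rcases var_cases hv with h' | h' <;> [exact hCt (h' ▸ hlC); exact hCf (h' ▸ hlC)]
          exact ⟨l, hlC, by rw [Function.update_of_ne hvar]; exact hlτ⟩
    · rintro ⟨b, hb⟩
      intro E hE
      simp only [DP, Finset.mem_union, Finset.mem_filter, Finset.mem_image,
        Finset.mem_product] at hE
      rcases hE with ⟨hEF, hEt, hEf⟩ | ⟨⟨C, D⟩, ⟨⟨hCF, hDF⟩, hCt, hDx, _⟩, rfl⟩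
      · obtain ⟨l, hlE, hlτ⟩ := hb E hEF
        have hvar : l.1 ≠ x := by
          intro hv
          rcases var_cases hv with h' | h' <;> [exact hEt (h' ▸ hlE); exact hEf (h' ▸ hlE)]
        refine ⟨l, hlE, ?_⟩
        rw [Function.update_of_ne hvar] at hlτ; exact hlτ
      · cases b
        · -- b = false : use C, the clause containing (x,true)
          obtain ⟨l, hlC, hlτ⟩ := hb C hCF
          have h1 : l ≠ (x, true) := by
            rintro rfl; simp [Function.update_self] at hlτ
          have h2 : l ≠ (x, false) := by
            rintro rfl
            have := hnt C hCF (x, true) hCt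
            simp [Lit.neg] at this
            exact this hlC
          have hvar := ne_var h1 h2
          refine ⟨l, mem_res.mpr ⟨Or.inl hlC, h1, h2⟩, ?_⟩
          rw [Function.update_of_ne hvar] at hlτ; exact hlτ
        · -- b = true : use D
          obtain ⟨l, hlD, hlτ⟩ := hb D hDF
          have h2 : l ≠ (x, false) := by
            rintro rfl; simp [Function.update_self] at hlτ
          have h1 : l ≠ (x, true) := by
            rintro rfl
            have := hnt D hDF (x, false) hDx
            simp [Lit.neg] at this
            exact this hlD
          have hvar := ne_var h1 h2
          refine ⟨l, mem_res.mpr ⟨Or.inr hlD, h1, h2⟩, ?_⟩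
          rw [Function.update_of_ne hvar] at hlτ; exact hlτ
  refine ⟨main, ?_⟩
  constructor
  · rintro ⟨τ, hτ⟩
    exact ⟨τ, (main τ).mpr ⟨τ x, by simpa [Function.update_eq_self] using hτ⟩⟩
  · rintro ⟨τ, hτ⟩
    obtain ⟨b, hb⟩ := (main τ).mp hτ
    exact ⟨_, hb⟩
end

section
/- In the lexicographically minimal adjacency matrix of a clause-literal graph of a CNF formula with n variables (with the 2n literal vertices preceding the clause vertices), the upper-left 2n×2n block is antidiagonal: for all i, j ≤ 2n, the (i,j)-entry is 1 if and only if i + j = 2n + 1. -/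
def lexLt {N : ℕ} (A B : Fin N → Fin N → Bool) : Prop :=
  ∃ p : Fin N × Fin N,
    (∀ q : Fin N × Fin N, Prod.Lex (· < ·) (· < ·) q p → A q.1 q.2 = B q.1 q.2) ∧
    A p.1 p.2 = false ∧ B p.1 p.2 = true

theorem stmt8 (n m : ℕ) (A : Fin (2*n+m) → Fin (2*n+m) → Bool)
    (hsymm : ∀ i j, A i j = A j i) (hirrefl : ∀ i, A i i = false)
    (hmatch : ∀ i : Fin (2*n+m), (i : ℕ) < 2*n →
      ∃! j : Fin (2*n+m), (j : ℕ) < 2*n ∧ A i j = true)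
    (hmin : ∀ π : Equiv.Perm (Fin (2*n+m)),
      (∀ i, (π i : ℕ) < 2*n ↔ (i : ℕ) < 2*n) →
      ¬ lexLt (fun i j => A (π i) (π j)) A) :
    ∀ i j : Fin (2*n+m), (i : ℕ) < 2*n → (j : ℕ) < 2*n →
      (A i j = true ↔ (i : ℕ) + (j : ℕ) + 1 = 2*n) := by
  -- partners are unique
  have uniq : ∀ i : Fin (2*n+m), (i:ℕ) < 2*n → ∀ j j' : Fin (2*n+m),
      (j:ℕ) < 2*n → A i j = true → (j':ℕ) < 2*n → A i j' = true → j = j' := by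
    intro i hi j j' hj hAj hj' hAj'
    obtain ⟨p, _, hp⟩ := hmatch i hi
    rw [hp j ⟨hj, hAj⟩, hp j' ⟨hj', hAj'⟩]
  have main : ∀ k : ℕ, ∀ i : Fin (2*n+m), (i:ℕ) = k → (i:ℕ) < 2*n →
      ∀ j : Fin (2*n+m), (j:ℕ) < 2*n → A i j = true → (i:ℕ) + (j:ℕ) + 1 = 2*n := by
    intro k
    induction k using Nat.strong_induction_on with
    | _ k IH =>
    intro i hik hi j hj hA
    by_contra hcon
    have hji : (j:ℕ) ≠ (i:ℕ) := by
      intro h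
      have hj' : j = i := Fin.ext h
      rw [hj', hirrefl] at hA
      exact Bool.false_ne_true hA
    rcases lt_or_gt_of_ne hji with hlt | hgt
    · have := IH (j:ℕ) (by omega) j rfl hj i hi (by rw [hsymm]; exact hA)
      omega
    by_cases hin : n ≤ (i:ℕ)
    · -- i ≥ n : its antidiagonal mate is smaller, use IH on the mate
      have ht2 : 2*n-1-(i:ℕ) < 2*n+m := by omega
      set t : Fin (2*n+m) := ⟨2*n-1-(i:ℕ), ht2⟩ with hteq
      have htv : (t:ℕ) = 2*n-1-(i:ℕ) := rfl
      have htlt : (t:ℕ) < 2*n := by omega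
      obtain ⟨p, ⟨hp2n, hpA⟩, _⟩ := hmatch t htlt
      have hptv : (t:ℕ) + (p:ℕ) + 1 = 2*n := IH (t:ℕ) (by omega) t rfl htlt p hp2n hpA
      have hpi : p = i := Fin.ext (by omega)
      rw [hpi] at hpA
      have hAit : A i t = true := by rw [hsymm]; exact hpA
      have := congrArg Fin.val (uniq i hi j t hj hA htlt hAit)
      omega
    push_neg at hin
    by_cases hjhigh : 2*n-1-(i:ℕ) < (j:ℕ)
    · -- j beyond the antidiagonal mate: j's antidiagonal mate is < i, use IH
      have ht2 : 2*n-1-(j:ℕ) < 2*n+m := by omega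
      set t : Fin (2*n+m) := ⟨2*n-1-(j:ℕ), ht2⟩ with hteq
      have htv : (t:ℕ) = 2*n-1-(j:ℕ) := rfl
      have htlt : (t:ℕ) < 2*n := by omega
      obtain ⟨p, ⟨hp2n, hpA⟩, _⟩ := hmatch t htlt
      have hptv : (t:ℕ) + (p:ℕ) + 1 = 2*n := IH (t:ℕ) (by omega) t rfl htlt p hp2n hpA
      have hpj : p = j := Fin.ext (by omega)
      rw [hpj] at hpA
      have h1 : A j t = true := by rw [hsymm]; exact hpA
      have h2 : A j i = true := by rw [hsymm]; exact hA
      have := congrArg Fin.val (uniq j hj t i htlt h1 hi h2)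
      omega
    push_neg at hjhigh
    have hjlt : (j:ℕ) < 2*n-1-(i:ℕ) := by omega
    -- swap j with the antidiagonal mate t of i to get a lex-smaller matrix
    have ht2 : 2*n-1-(i:ℕ) < 2*n+m := by omega
    set t : Fin (2*n+m) := ⟨2*n-1-(i:ℕ), ht2⟩ with hteq
    have htv : (t:ℕ) = 2*n-1-(i:ℕ) := rfl
    have htlt : (t:ℕ) < 2*n := by omega
    have hjt : j ≠ t := fun h => by have := congrArg Fin.val h; omega
    set π := Equiv.swap j t with hπ
    have hπj : π j = t := Equiv.swap_apply_left j t
    have hπt : π t = j := Equiv.swap_apply_right j t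
    have hπother : ∀ x : Fin (2*n+m), x ≠ j → x ≠ t → π x = x :=
      fun x h1 h2 => Equiv.swap_apply_of_ne_of_ne h1 h2
    have hπi : π i = i := by
      apply hπother
      · exact fun h => by have := congrArg Fin.val h; omega
      · exact fun h => by have := congrArg Fin.val h; omega
    have hblock : ∀ x : Fin (2*n+m), ((π x : ℕ) < 2*n ↔ (x:ℕ) < 2*n) := by
      intro x
      by_cases h1 : x = j
      · rw [h1, hπj]; omega
      by_cases h2 : x = t
      · rw [h2, hπt]; omega
      · rw [hπother x h1 h2]
    have hAit : A i t = false := by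
      cases hAt : A i t with
      | false => rfl
      | true =>
        have := congrArg Fin.val (uniq i hi j t hj hA htlt hAt)
        omega
    -- earlier rows have no entries at columns ≤ t
    have hrowfalse : ∀ q y : Fin (2*n+m), (q:ℕ) < (i:ℕ) → (y:ℕ) < 2*n →
        (y:ℕ) ≤ 2*n-1-(i:ℕ) → A q y = false := by
      intro q y hq hy2 hyle
      cases hAq : A q y with
      | false => rfl
      | true =>
        have hq2 : (q:ℕ) < 2*n := by omega
        have := IH (q:ℕ) (by omega) q rfl hq2 y hy2 hAq
        omega
    apply hmin π hblock
    refine ⟨(i, j), ?_, ?_, hA⟩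
    · intro q hq
      show A (π q.1) (π q.2) = A q.1 q.2
      rw [Prod.lex_iff] at hq
      rcases hq with h1 | ⟨h1, h2⟩
      · have hq1v : (q.1:ℕ) < (i:ℕ) := h1
        have hπq1 : π q.1 = q.1 := by
          apply hπother
          · exact fun h => by have := congrArg Fin.val h; omega
          · exact fun h => by have := congrArg Fin.val h; omega
        simp only [hπq1]
        by_cases hq2j : q.2 = j
        · rw [hq2j]
          simp only [hπj]
          rw [hrowfalse q.1 t hq1v htlt (by omega),
              hrowfalse q.1 j hq1v hj (by omega)]
        by_cases hq2t : q.2 = t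
        · rw [hq2t]
          simp only [hπt]
          rw [hrowfalse q.1 j hq1v hj (by omega),
              hrowfalse q.1 t hq1v htlt (by omega)]
        · rw [hπother q.2 hq2j hq2t]
      · have hq2v : (q.2:ℕ) < (j:ℕ) := h2
        have hπq2 : π q.2 = q.2 := by
          apply hπother
          · exact fun h => by have := congrArg Fin.val h; omega
          · exact fun h => by have := congrArg Fin.val h; omega
        rw [h1, hπi, hπq2]
    · show A (π i) (π j) = false
      rw [hπi, hπj]
      exact hAit
  intro i j hi hj
  constructor
  · exact fun h => main (i:ℕ) i rfl hi j hj h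
  · intro h
    obtain ⟨p, ⟨hp2n, hpA⟩, _⟩ := hmatch i hi
    have := main (i:ℕ) i rfl hi p hp2n hpA
    have hpj : p = j := Fin.ext (by omega)
    rw [← hpj]
    exact hpA
end

section
/- Every unsatisfiable k-CNF formula in which each variable occurs at most once positively (a (k,1,q)-formula for some q) contains a clause all of whose literals occur exactly once in the formula. -/
theorem stmt10 (k : ℕ) (F : CNF) (hF : isKCNF k F) (hunsat : ¬ Satisfiable F)
    (hpos : ∀ v : ℕ, ldeg F (v, true) ≤ 1) :
    ∃ C ∈ F, ∀ l ∈ C, ldeg F l = 1 := by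
  by_contra h
  push_neg at h
  apply hunsat
  refine ⟨fun v => if 2 ≤ ldeg F (v, false) then false else true, fun C hC => ?_⟩
  obtain ⟨l, hl, hne⟩ := h C hC
  have h1 : 1 ≤ ldeg F l := by
    apply Finset.card_pos.mpr
    exact ⟨C, Finset.mem_filter.mpr ⟨hC, hl⟩⟩
  have h2 : 2 ≤ ldeg F l := by omega
  obtain ⟨v, b⟩ := l
  have hb : b = false := by
    cases b
    · rfl
    · have := hpos v; omega
  subst hb
  exact ⟨(v, false), hl, by simp [h2]⟩
end

section
/- Let F be a smallest (minimum number of clauses) unsatisfiable (3,1,q)-formula with q ≥ 3 and let {x1,x2,x3} ∈ F be a clause whose three literals each occur exactly once in F. Then: (a) no clause of F contains two of ¬x1, ¬x2, ¬x3; and (b) each literal ¬xi occurs in at least 3 clauses of F. -/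
open Finset

lemma lit_eq_or_neg (l a : Lit) (h : l.1 = a.1) : l = a ∨ l = Lit.neg a := by
  rcases l with ⟨v, p⟩; rcases a with ⟨w, s⟩
  simp only [Lit.neg] at *
  subst h
  cases p <;> cases s <;> simp

lemma neg_neg' (l : Lit) : Lit.neg (Lit.neg l) = l := by simp [Lit.neg]

lemma neg_ne (a : Lit) : Lit.neg a ≠ a := by
  rcases a with ⟨v, p⟩; cases p <;> simp [Lit.neg]

lemma ldeg_mono {F G : CNF} (h : F ⊆ G) (l : Lit) : ldeg F l ≤ ldeg G l :=
  Finset.card_le_card (Finset.filter_subset_filter _ h)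

lemma ldeg_erase_add_one {F : CNF} {D : Clause} {l : Lit} (hD : D ∈ F) (hl : l ∈ D) :
    ldeg (F.erase D) l + 1 = ldeg F l := by
  unfold ldeg
  rw [Finset.filter_erase]
  exact Finset.card_erase_add_one (Finset.mem_filter.mpr ⟨hD, hl⟩)

lemma ldeg_insert_of_notMem {F : CNF} {D : Clause} {l : Lit} (h : l ∉ D) :
    ldeg (insert D F) l = ldeg F l := by
  unfold ldeg; rw [Finset.filter_insert, if_neg h]

lemma ldeg_insert_le {F : CNF} {D : Clause} {l : Lit} :
    ldeg (insert D F) l ≤ ldeg F l + 1 := by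
  unfold ldeg; rw [Finset.filter_insert]
  split
  · exact Finset.card_insert_le _ _
  · omega

lemma ldeg_unique {F : CNF} {a : Lit} (h : ldeg F a = 1)
    {C E : Clause} (hC : C ∈ F) (haC : a ∈ C) (hE : E ∈ F) (haE : a ∈ E) : E = C := by
  have hC' : C ∈ F.filter (fun C => a ∈ C) := Finset.mem_filter.mpr ⟨hC, haC⟩
  have hE' : E ∈ F.filter (fun C => a ∈ C) := Finset.mem_filter.mpr ⟨hE, haE⟩
  exact Finset.card_le_one.mp (le_of_eq h) E hE' C hC'

lemma update_sat {τ : ℕ → Bool} {E : Clause} {l : Lit} (hl : l ∈ E) (hτ : τ l.1 = l.2)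
    {w : ℕ} (hw : l.1 ≠ w) (v : Bool) : satClause (Function.update τ w v) E :=
  ⟨l, hl, by rw [Function.update_apply, if_neg hw]; exact hτ⟩

lemma other_sat {F : CNF} {a : Lit} {C0 : Clause} (ha : ldeg F a = 1)
    (hC0 : C0 ∈ F) (haC0 : a ∈ C0) {E : Clause} (hE : E ∈ F) (hEC0 : E ≠ C0)
    (hEna : Lit.neg a ∉ E) {τ : ℕ → Bool} (hτE : satClause τ E) (v : Bool) :
    satClause (Function.update τ a.1 v) E := by
  obtain ⟨l, hl, hτl⟩ := hτE
  by_cases h : l.1 = a.1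
  · rcases lit_eq_or_neg l a h with rfl | rfl
    · exact absurd (ldeg_unique ha hC0 haC0 hE hl) hEC0
    · exact absurd hl hEna
  · exact update_sat hl hτl h v

lemma blocked (q : ℕ) (F : CNF) (hF : KPQ 3 1 q F) (hunsat : ¬ Satisfiable F)
    (hmin : ∀ G : CNF, KPQ 3 1 q G → ¬ Satisfiable G → F.card ≤ G.card)
    (a b c : Lit) (hC : ({a, b, c} : Clause) ∈ F) (hab : a ≠ b) (ha : ldeg F a = 1)
    (D : Clause) (hD : D ∈ F) (hna : Lit.neg a ∈ D) (hnb : Lit.neg b ∈ D) : False := by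
  have hnt := (hF.1 _ hC).1
  have haC : a ∈ ({a, b, c} : Clause) := by simp
  have hbC : b ∈ ({a, b, c} : Clause) := by simp
  have hba : b.1 ≠ a.1 := by
    intro h
    rcases lit_eq_or_neg b a h with h' | h'
    · exact hab h'.symm
    · exact hnt a haC (h' ▸ hbC)
  have hG : ¬ Satisfiable (F.erase D) := by
    rintro ⟨τ, hτ⟩
    by_cases hsD : satClause τ D
    · refine hunsat ⟨τ, fun E hE => ?_⟩
      by_cases hED : E = D
      · exact hED ▸ hsD
      · exact hτ E (Finset.mem_erase.mpr ⟨hED, hE⟩)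
    · apply hunsat
      refine ⟨Function.update τ a.1 (!a.2), fun E hE => ?_⟩
      by_cases hED : E = D
      · subst hED
        exact ⟨Lit.neg a, hna, by simp [Lit.neg]⟩
      · obtain ⟨l, hl, hτl⟩ := hτ E (Finset.mem_erase.mpr ⟨hED, hE⟩)
        by_cases h : l.1 = a.1
        · rcases lit_eq_or_neg l a h with rfl | rfl
          · have hE' := ldeg_unique ha hC haC hE hl
            subst hE'
            have hb2 : τ b.1 = b.2 := by
              have h1 : ¬ (τ (Lit.neg b).1 = (Lit.neg b).2) := fun hh => hsD ⟨_, hnb, hh⟩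
              simp only [Lit.neg] at h1
              cases hbb : b.2 <;> cases htt : τ b.1 <;> simp_all
            exact update_sat hbC hb2 hba _
          · exact ⟨Lit.neg a, hl, by simp [Lit.neg]⟩
        · exact update_sat hl hτl h _
  have hKPQ : KPQ 3 1 q (F.erase D) :=
    ⟨fun E hE => hF.1 E (Finset.mem_of_mem_erase hE),
     fun v => ⟨le_trans (ldeg_mono (Finset.erase_subset _ _) _) (hF.2 v).1,
               le_trans (ldeg_mono (Finset.erase_subset _ _) _) (hF.2 v).2⟩⟩
  have h1 := hmin _ hKPQ hG
  have h2 : (F.erase D).card + 1 = F.card := Finset.card_erase_add_one hD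
  omega

lemma partB (q : ℕ) (hq : 3 ≤ q) (F : CNF) (hF : KPQ 3 1 q F) (hunsat : ¬ Satisfiable F)
    (hmin : ∀ G : CNF, KPQ 3 1 q G → ¬ Satisfiable G → F.card ≤ G.card)
    (a b c : Lit) (hC : ({a, b, c} : Clause) ∈ F)
    (hab : a ≠ b) (hac : a ≠ c) (hbc : b ≠ c)
    (ha : ldeg F a = 1) (hb : ldeg F b = 1) (hc : ldeg F c = 1)
    (hA : ∀ D ∈ F, Lit.neg a ∈ D → Lit.neg b ∉ D ∧ Lit.neg c ∉ D)
    (h2 : ldeg F (Lit.neg a) ≤ 2) : False := by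
  classical
  set C0 : Clause := {a, b, c} with hC0def
  have hnt := (hF.1 _ hC).1
  have haC : a ∈ C0 := by simp [hC0def]
  have hbC : b ∈ C0 := by simp [hC0def]
  have hcC : c ∈ C0 := by simp [hC0def]
  have hba : b.1 ≠ a.1 := by
    intro h
    rcases lit_eq_or_neg b a h with h' | h'
    · exact hab h'.symm
    · exact hnt a haC (h' ▸ hbC)
  have hca : c.1 ≠ a.1 := by
    intro h
    rcases lit_eq_or_neg c a h with h' | h'
    · exact hac h'.symm
    · exact hnt a haC (h' ▸ hcC)
  have hnaC0 : Lit.neg a ∉ C0 := hnt a haC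
  set S : CNF := F.filter (fun E => Lit.neg a ∈ E) with hSdef
  have hmemS : ∀ E, E ∈ S ↔ E ∈ F ∧ Lit.neg a ∈ E := fun E => Finset.mem_filter
  have hScard : S.card ≤ 2 := h2
  rcases (by omega : S.card = 0 ∨ S.card = 1 ∨ S.card = 2) with h0 | h1 | hh2
  · -- case 0
    have hSe : S = ∅ := Finset.card_eq_zero.mp h0
    have hGuns : ¬ Satisfiable (F.erase C0) := by
      rintro ⟨τ, hτ⟩
      refine hunsat ⟨Function.update τ a.1 a.2, fun E hE => ?_⟩
      by_cases hE0 : E = C0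
      · exact ⟨a, hE0 ▸ haC, by simp⟩
      · have hEna : Lit.neg a ∉ E := fun hh => by
          have : E ∈ S := (hmemS E).mpr ⟨hE, hh⟩
          simp [hSe] at this
        exact other_sat ha hC haC hE hE0 hEna (hτ E (Finset.mem_erase.mpr ⟨hE0, hE⟩)) _
    have hKPQ : KPQ 3 1 q (F.erase C0) :=
      ⟨fun E hE => hF.1 E (Finset.mem_of_mem_erase hE),
       fun v => ⟨le_trans (ldeg_mono (Finset.erase_subset _ _) _) (hF.2 v).1,
                 le_trans (ldeg_mono (Finset.erase_subset _ _) _) (hF.2 v).2⟩⟩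
    have hm := hmin _ hKPQ hGuns
    have hce : (F.erase C0).card + 1 = F.card := Finset.card_erase_add_one hC
    omega
  · -- case 1
    obtain ⟨D1, hSD⟩ := Finset.card_eq_one.mp h1
    have hD1S : D1 ∈ S := hSD ▸ Finset.mem_singleton_self D1
    have hD1F : D1 ∈ F := ((hmemS D1).mp hD1S).1
    have hnaD1 : Lit.neg a ∈ D1 := ((hmemS D1).mp hD1S).2
    have hD1C0 : D1 ≠ C0 := fun h => hnaC0 (h ▸ hnaD1)
    obtain ⟨hnbD1, hncD1⟩ := hA D1 hD1F hnaD1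
    have hnt1 := (hF.1 _ hD1F).1
    have haD1 : a ∉ D1 := fun h => hnt1 a h hnaD1
    have hbD1 : b ∉ D1 := fun h => hD1C0 (ldeg_unique hb hC hbC hD1F h)
    set D1' : Clause := insert b (D1.erase (Lit.neg a)) with hD1'def
    set G : CNF := insert D1' ((F.erase C0).erase D1) with hGdef
    have hbErase : b ∉ D1.erase (Lit.neg a) := fun h => hbD1 (Finset.mem_of_mem_erase h)
    have hD1card : D1.card = 3 := (hF.1 _ hD1F).2
    have hD1'card : D1'.card = 3 := by
      rw [hD1'def, Finset.card_insert_of_notMem hbErase, Finset.card_erase_of_mem hnaD1, hD1card]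
    have hD1'nt : Clause.nontaut D1' := by
      intro l hl hnl
      rw [hD1'def] at hl hnl
      rcases Finset.mem_insert.mp hl with rfl | hl'
      · rcases Finset.mem_insert.mp hnl with h' | h'
        · exact neg_ne l h'
        · exact hnbD1 (Finset.mem_of_mem_erase h')
      · rcases Finset.mem_insert.mp hnl with h' | h'
        · have hlb : l = Lit.neg b := by rw [← h', neg_neg']
          exact hnbD1 (hlb ▸ Finset.mem_of_mem_erase hl')
        · exact hnt1 l (Finset.mem_of_mem_erase hl') (Finset.mem_of_mem_erase h')
    have hD1mem' : D1 ∈ F.erase C0 := Finset.mem_erase.mpr ⟨hD1C0, hD1F⟩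
    have hGb : ldeg G b ≤ 1 := by
      have hsub : G.filter (fun E => b ∈ E) ⊆ {D1'} := by
        intro E hE
        obtain ⟨hEG, hbE⟩ := Finset.mem_filter.mp hE
        rcases Finset.mem_insert.mp hEG with rfl | hE'
        · exact Finset.mem_singleton_self _
        · exfalso
          have hEF : E ∈ F := Finset.mem_of_mem_erase (Finset.mem_of_mem_erase hE')
          have hEC0 : E ≠ C0 := (Finset.mem_erase.mp (Finset.mem_of_mem_erase hE')).1
          exact hEC0 (ldeg_unique hb hC hbC hEF hbE)
      calc ldeg G b ≤ ({D1'} : CNF).card := Finset.card_le_card hsub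
        _ = 1 := Finset.card_singleton _
    have hGl : ∀ l : Lit, l ≠ b → ldeg G l ≤ ldeg F l := by
      intro l hlb
      by_cases hl : l ∈ D1'
      · have hlD1 : l ∈ D1 := by
          rw [hD1'def] at hl
          rcases Finset.mem_insert.mp hl with rfl | h'
          · exact absurd rfl hlb
          · exact Finset.mem_of_mem_erase h'
        have e1 : ldeg ((F.erase C0).erase D1) l + 1 = ldeg (F.erase C0) l :=
          ldeg_erase_add_one hD1mem' hlD1
        have e2 : ldeg (F.erase C0) l ≤ ldeg F l := ldeg_mono (Finset.erase_subset _ _) _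
        have e3 : ldeg G l ≤ ldeg ((F.erase C0).erase D1) l + 1 := by
          rw [hGdef]; exact ldeg_insert_le
        omega
      · rw [hGdef, ldeg_insert_of_notMem hl]
        exact le_trans (ldeg_mono (Finset.erase_subset _ _) _)
          (ldeg_mono (Finset.erase_subset _ _) _)
    have hGKPQ : KPQ 3 1 q G := by
      constructor
      · intro E hE
        rcases Finset.mem_insert.mp hE with rfl | hE'
        · exact ⟨hD1'nt, hD1'card⟩
        · exact hF.1 E (Finset.mem_of_mem_erase (Finset.mem_of_mem_erase hE'))
      · intro v
        constructor
        · by_cases hvb : ((v, true) : Lit) = b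
          · rw [hvb]; exact hGb
          · exact le_trans (hGl _ hvb) (hF.2 v).1
        · by_cases hvb : ((v, false) : Lit) = b
          · rw [hvb]; exact le_trans hGb (by omega)
          · exact le_trans (hGl _ hvb) (hF.2 v).2
    have hGuns : ¬ Satisfiable G := by
      rintro ⟨τ, hτ⟩
      have hsD1' := hτ D1' (Finset.mem_insert_self _ _)
      obtain ⟨l0, hl0, hτl0⟩ := hsD1'
      have hbase : ∀ E ∈ F, E ≠ C0 → E ≠ D1 → ∀ v : Bool,
          satClause (Function.update τ a.1 v) E := by
        intro E hE hE0 hE1 v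
        have hEG : E ∈ G := Finset.mem_insert_of_mem
          (Finset.mem_erase.mpr ⟨hE1, Finset.mem_erase.mpr ⟨hE0, hE⟩⟩)
        have hEna : Lit.neg a ∉ E := fun hh => hE1 (by
          have hES : E ∈ S := (hmemS E).mpr ⟨hE, hh⟩
          rw [hSD] at hES; exact Finset.mem_singleton.mp hES)
        exact other_sat ha hC haC hE hE0 hEna (hτ E hEG) _
      rw [hD1'def] at hl0
      rcases Finset.mem_insert.mp hl0 with rfl | hl0'
      · refine hunsat ⟨Function.update τ a.1 (!a.2), fun E hE => ?_⟩
        by_cases hE1 : E = D1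
        · exact ⟨Lit.neg a, hE1 ▸ hnaD1, by simp [Lit.neg]⟩
        by_cases hE0 : E = C0
        · exact hE0 ▸ update_sat hbC hτl0 hba _
        · exact hbase E hE hE0 hE1 _
      · have hl0D1 : l0 ∈ D1 := Finset.mem_of_mem_erase hl0'
        have hl0a : l0.1 ≠ a.1 := by
          intro h
          rcases lit_eq_or_neg l0 a h with rfl | rfl
          · exact haD1 hl0D1
          · exact (Finset.mem_erase.mp hl0').1 rfl
        refine hunsat ⟨Function.update τ a.1 a.2, fun E hE => ?_⟩
        by_cases hE0 : E = C0
        · exact ⟨a, hE0 ▸ haC, by simp⟩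
        by_cases hE1 : E = D1
        · exact hE1 ▸ update_sat hl0D1 hτl0 hl0a _
        · exact hbase E hE hE0 hE1 _
    have hm := hmin _ hGKPQ hGuns
    have c1 : G.card ≤ ((F.erase C0).erase D1).card + 1 := by
      rw [hGdef]; exact Finset.card_insert_le _ _
    have c2 : ((F.erase C0).erase D1).card + 1 = (F.erase C0).card :=
      Finset.card_erase_add_one hD1mem'
    have c3 : (F.erase C0).card + 1 = F.card := Finset.card_erase_add_one hC
    omega
  · -- case 2
    obtain ⟨D1, D2, hD12, hSD⟩ := Finset.card_eq_two.mp hh2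
    have hD1S : D1 ∈ S := by rw [hSD]; simp
    have hD2S : D2 ∈ S := by rw [hSD]; simp
    have hD1F : D1 ∈ F := ((hmemS D1).mp hD1S).1
    have hD2F : D2 ∈ F := ((hmemS D2).mp hD2S).1
    have hnaD1 : Lit.neg a ∈ D1 := ((hmemS D1).mp hD1S).2
    have hnaD2 : Lit.neg a ∈ D2 := ((hmemS D2).mp hD2S).2
    have hD1C0 : D1 ≠ C0 := fun h => hnaC0 (h ▸ hnaD1)
    have hD2C0 : D2 ≠ C0 := fun h => hnaC0 (h ▸ hnaD2)
    obtain ⟨hnbD1, hncD1⟩ := hA D1 hD1F hnaD1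
    obtain ⟨hnbD2, hncD2⟩ := hA D2 hD2F hnaD2
    have hnt1 := (hF.1 _ hD1F).1
    have hnt2 := (hF.1 _ hD2F).1
    have haD1 : a ∉ D1 := fun h => hnt1 a h hnaD1
    have haD2 : a ∉ D2 := fun h => hnt2 a h hnaD2
    have hbD1 : b ∉ D1 := fun h => hD1C0 (ldeg_unique hb hC hbC hD1F h)
    have hbD2 : b ∉ D2 := fun h => hD2C0 (ldeg_unique hb hC hbC hD2F h)
    have hcD2 : c ∉ D2 := fun h => hD2C0 (ldeg_unique hc hC hcC hD2F h)
    set D1' : Clause := insert b (D1.erase (Lit.neg a)) with hD1'def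
    set D2' : Clause := insert c (D2.erase (Lit.neg a)) with hD2'def
    set base : CNF := ((F.erase C0).erase D1).erase D2 with hbasedef
    set G : CNF := insert D1' (insert D2' base) with hGdef
    have hD1mem' : D1 ∈ F.erase C0 := Finset.mem_erase.mpr ⟨hD1C0, hD1F⟩
    have hD2mem' : D2 ∈ (F.erase C0).erase D1 :=
      Finset.mem_erase.mpr ⟨hD12.symm, Finset.mem_erase.mpr ⟨hD2C0, hD2F⟩⟩
    have hbErase : b ∉ D1.erase (Lit.neg a) := fun h => hbD1 (Finset.mem_of_mem_erase h)
    have hcErase : c ∉ D2.erase (Lit.neg a) := fun h => hcD2 (Finset.mem_of_mem_erase h)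
    have hD1'card : D1'.card = 3 := by
      rw [hD1'def, Finset.card_insert_of_notMem hbErase, Finset.card_erase_of_mem hnaD1,
        (hF.1 _ hD1F).2]
    have hD2'card : D2'.card = 3 := by
      rw [hD2'def, Finset.card_insert_of_notMem hcErase, Finset.card_erase_of_mem hnaD2,
        (hF.1 _ hD2F).2]
    have hD1'nt : Clause.nontaut D1' := by
      intro l hl hnl
      rw [hD1'def] at hl hnl
      rcases Finset.mem_insert.mp hl with rfl | hl'
      · rcases Finset.mem_insert.mp hnl with h' | h'
        · exact neg_ne l h'
        · exact hnbD1 (Finset.mem_of_mem_erase h')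
      · rcases Finset.mem_insert.mp hnl with h' | h'
        · have hlb : l = Lit.neg b := by rw [← h', neg_neg']
          exact hnbD1 (hlb ▸ Finset.mem_of_mem_erase hl')
        · exact hnt1 l (Finset.mem_of_mem_erase hl') (Finset.mem_of_mem_erase h')
    have hD2'nt : Clause.nontaut D2' := by
      intro l hl hnl
      rw [hD2'def] at hl hnl
      rcases Finset.mem_insert.mp hl with rfl | hl'
      · rcases Finset.mem_insert.mp hnl with h' | h'
        · exact neg_ne l h'
        · exact hncD2 (Finset.mem_of_mem_erase h')
      · rcases Finset.mem_insert.mp hnl with h' | h'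
        · have hlb : l = Lit.neg c := by rw [← h', neg_neg']
          exact hncD2 (hlb ▸ Finset.mem_of_mem_erase hl')
        · exact hnt2 l (Finset.mem_of_mem_erase hl') (Finset.mem_of_mem_erase h')
    have hbaseF : ∀ E ∈ base, E ∈ F := fun E hE =>
      Finset.mem_of_mem_erase (Finset.mem_of_mem_erase (Finset.mem_of_mem_erase hE))
    have hbaseC0 : ∀ E ∈ base, E ≠ C0 := fun E hE =>
      (Finset.mem_erase.mp (Finset.mem_of_mem_erase (Finset.mem_of_mem_erase hE))).1
    have hGb : ldeg G b ≤ 1 := by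
      have hsub : G.filter (fun E => b ∈ E) ⊆ {D1'} := by
        intro E hE
        obtain ⟨hEG, hbE⟩ := Finset.mem_filter.mp hE
        rcases Finset.mem_insert.mp hEG with rfl | hE'
        · exact Finset.mem_singleton_self _
        · exfalso
          rcases Finset.mem_insert.mp hE' with rfl | hE''
          · rw [hD2'def] at hbE
            rcases Finset.mem_insert.mp hbE with h' | h'
            · exact hbc h'
            · exact hbD2 (Finset.mem_of_mem_erase h')
          · exact hbaseC0 E hE'' (ldeg_unique hb hC hbC (hbaseF E hE'') hbE)
      calc ldeg G b ≤ ({D1'} : CNF).card := Finset.card_le_card hsub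
        _ = 1 := Finset.card_singleton _
    have hGc : ldeg G c ≤ 1 := by
      have hsub : G.filter (fun E => c ∈ E) ⊆ {D2'} := by
        intro E hE
        obtain ⟨hEG, hcE⟩ := Finset.mem_filter.mp hE
        rcases Finset.mem_insert.mp hEG with rfl | hE'
        · exfalso
          rw [hD1'def] at hcE
          rcases Finset.mem_insert.mp hcE with h' | h'
          · exact hbc h'.symm
          · exact hD1C0 (ldeg_unique hc hC hcC hD1F (Finset.mem_of_mem_erase h'))
        · rcases Finset.mem_insert.mp hE' with rfl | hE''
          · exact Finset.mem_singleton_self _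
          · exact absurd (ldeg_unique hc hC hcC (hbaseF E hE'') hcE) (hbaseC0 E hE'')
      calc ldeg G c ≤ ({D2'} : CNF).card := Finset.card_le_card hsub
        _ = 1 := Finset.card_singleton _
    have hGl : ∀ l : Lit, l ≠ b → l ≠ c → ldeg G l ≤ ldeg F l := by
      intro l hlb hlc
      have m1 : ldeg base l ≤ ldeg ((F.erase C0).erase D1) l :=
        ldeg_mono (Finset.erase_subset _ _) _
      have m2 : ldeg ((F.erase C0).erase D1) l ≤ ldeg (F.erase C0) l :=
        ldeg_mono (Finset.erase_subset _ _) _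
      have m3 : ldeg (F.erase C0) l ≤ ldeg F l := ldeg_mono (Finset.erase_subset _ _) _
      by_cases h1 : l ∈ D1'
      · have hlD1 : l ∈ D1 := by
          rw [hD1'def] at h1
          rcases Finset.mem_insert.mp h1 with rfl | h'
          · exact absurd rfl hlb
          · exact Finset.mem_of_mem_erase h'
        have e4 := ldeg_erase_add_one hD1mem' hlD1
        have eG : ldeg G l ≤ ldeg (insert D2' base) l + 1 := by
          rw [hGdef]; exact ldeg_insert_le
        by_cases h2 : l ∈ D2'
        · have hlD2 : l ∈ D2 := by
            rw [hD2'def] at h2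
            rcases Finset.mem_insert.mp h2 with rfl | h'
            · exact absurd rfl hlc
            · exact Finset.mem_of_mem_erase h'
          have e2 : ldeg (insert D2' base) l ≤ ldeg base l + 1 := ldeg_insert_le
          have e3 : ldeg base l + 1 = ldeg ((F.erase C0).erase D1) l := by
            rw [hbasedef]; exact ldeg_erase_add_one hD2mem' hlD2
          omega
        · have e2 : ldeg (insert D2' base) l = ldeg base l := ldeg_insert_of_notMem h2
          omega
      · have eG : ldeg G l = ldeg (insert D2' base) l := by
          rw [hGdef]; exact ldeg_insert_of_notMem h1
        by_cases h2 : l ∈ D2'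
        · have hlD2 : l ∈ D2 := by
            rw [hD2'def] at h2
            rcases Finset.mem_insert.mp h2 with rfl | h'
            · exact absurd rfl hlc
            · exact Finset.mem_of_mem_erase h'
          have e2 : ldeg (insert D2' base) l ≤ ldeg base l + 1 := ldeg_insert_le
          have e3 : ldeg base l + 1 = ldeg ((F.erase C0).erase D1) l := by
            rw [hbasedef]; exact ldeg_erase_add_one hD2mem' hlD2
          omega
        · have e2 : ldeg (insert D2' base) l = ldeg base l := ldeg_insert_of_notMem h2
          omega
    have hGKPQ : KPQ 3 1 q G := by
      constructor
      · intro E hE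
        rcases Finset.mem_insert.mp hE with rfl | hE'
        · exact ⟨hD1'nt, hD1'card⟩
        · rcases Finset.mem_insert.mp hE' with rfl | hE''
          · exact ⟨hD2'nt, hD2'card⟩
          · exact hF.1 E (hbaseF E hE'')
      · intro v
        constructor
        · by_cases hvb : ((v, true) : Lit) = b
          · rw [hvb]; exact hGb
          · by_cases hvc : ((v, true) : Lit) = c
            · rw [hvc]; exact hGc
            · exact le_trans (hGl _ hvb hvc) (hF.2 v).1
        · by_cases hvb : ((v, false) : Lit) = b
          · rw [hvb]; exact le_trans hGb (by omega)
          · by_cases hvc : ((v, false) : Lit) = c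
            · rw [hvc]; exact le_trans hGc (by omega)
            · exact le_trans (hGl _ hvb hvc) (hF.2 v).2
    have hGuns : ¬ Satisfiable G := by
      rintro ⟨τ, hτ⟩
      have hs1 := hτ D1' (Finset.mem_insert_self _ _)
      have hs2 := hτ D2' (Finset.mem_insert_of_mem (Finset.mem_insert_self _ _))
      have hbase_sat : ∀ E ∈ F, E ≠ C0 → E ≠ D1 → E ≠ D2 → ∀ v : Bool,
          satClause (Function.update τ a.1 v) E := by
        intro E hE hE0 hE1 hE2 v
        have hEG : E ∈ G := Finset.mem_insert_of_mem (Finset.mem_insert_of_mem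
          (Finset.mem_erase.mpr ⟨hE2, Finset.mem_erase.mpr ⟨hE1,
            Finset.mem_erase.mpr ⟨hE0, hE⟩⟩⟩))
        have hEna : Lit.neg a ∉ E := fun hh => by
          have hES : E ∈ S := (hmemS E).mpr ⟨hE, hh⟩
          rw [hSD] at hES
          rcases Finset.mem_insert.mp hES with h' | h'
          · exact hE1 h'
          · exact hE2 (Finset.mem_singleton.mp h')
        exact other_sat ha hC haC hE hE0 hEna (hτ E hEG) _
      by_cases hAx : ∃ l ∈ D1.erase (Lit.neg a), τ l.1 = l.2
      · by_cases hBx : ∃ l ∈ D2.erase (Lit.neg a), τ l.1 = l.2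
        · obtain ⟨l1, hl1, hτ1⟩ := hAx
          obtain ⟨l2, hl2, hτ2⟩ := hBx
          have hl1a : l1.1 ≠ a.1 := by
            intro h
            rcases lit_eq_or_neg l1 a h with rfl | rfl
            · exact haD1 (Finset.mem_of_mem_erase hl1)
            · exact (Finset.mem_erase.mp hl1).1 rfl
          have hl2a : l2.1 ≠ a.1 := by
            intro h
            rcases lit_eq_or_neg l2 a h with rfl | rfl
            · exact haD2 (Finset.mem_of_mem_erase hl2)
            · exact (Finset.mem_erase.mp hl2).1 rfl
          refine hunsat ⟨Function.update τ a.1 a.2, fun E hE => ?_⟩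
          by_cases hE0 : E = C0
          · exact ⟨a, hE0 ▸ haC, by simp⟩
          by_cases hE1 : E = D1
          · exact hE1 ▸ update_sat (Finset.mem_of_mem_erase hl1) hτ1 hl1a _
          by_cases hE2 : E = D2
          · exact hE2 ▸ update_sat (Finset.mem_of_mem_erase hl2) hτ2 hl2a _
          · exact hbase_sat E hE hE0 hE1 hE2 _
        · obtain ⟨l0, hl0, hτl0⟩ := hs2
          rw [hD2'def] at hl0
          rcases Finset.mem_insert.mp hl0 with rfl | hl0'
          · refine hunsat ⟨Function.update τ a.1 (!a.2), fun E hE => ?_⟩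
            by_cases hE1 : E = D1
            · exact ⟨Lit.neg a, hE1 ▸ hnaD1, by simp [Lit.neg]⟩
            by_cases hE2 : E = D2
            · exact ⟨Lit.neg a, hE2 ▸ hnaD2, by simp [Lit.neg]⟩
            by_cases hE0 : E = C0
            · exact hE0 ▸ update_sat hcC hτl0 hca _
            · exact hbase_sat E hE hE0 hE1 hE2 _
          · exact absurd ⟨l0, hl0', hτl0⟩ hBx
      · obtain ⟨l0, hl0, hτl0⟩ := hs1
        rw [hD1'def] at hl0
        rcases Finset.mem_insert.mp hl0 with rfl | hl0'
        · refine hunsat ⟨Function.update τ a.1 (!a.2), fun E hE => ?_⟩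
          by_cases hE1 : E = D1
          · exact ⟨Lit.neg a, hE1 ▸ hnaD1, by simp [Lit.neg]⟩
          by_cases hE2 : E = D2
          · exact ⟨Lit.neg a, hE2 ▸ hnaD2, by simp [Lit.neg]⟩
          by_cases hE0 : E = C0
          · exact hE0 ▸ update_sat hbC hτl0 hba _
          · exact hbase_sat E hE hE0 hE1 hE2 _
        · exact absurd ⟨l0, hl0', hτl0⟩ hAx
    have hm := hmin _ hGKPQ hGuns
    have c1 : G.card ≤ (insert D2' base).card + 1 := by
      rw [hGdef]; exact Finset.card_insert_le _ _
    have c1' : (insert D2' base).card ≤ base.card + 1 := Finset.card_insert_le _ _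
    have c2 : base.card + 1 = ((F.erase C0).erase D1).card := by
      rw [hbasedef]; exact Finset.card_erase_add_one hD2mem'
    have c3 : ((F.erase C0).erase D1).card + 1 = (F.erase C0).card :=
      Finset.card_erase_add_one hD1mem'
    have c4 : (F.erase C0).card + 1 = F.card := Finset.card_erase_add_one hC
    omega

theorem stmt11 (q : ℕ) (hq : 3 ≤ q) (F : CNF) (hF : KPQ 3 1 q F)
    (hunsat : ¬ Satisfiable F)
    (hmin : ∀ G : CNF, KPQ 3 1 q G → ¬ Satisfiable G → F.card ≤ G.card)
    (x : Fin 3 → Lit) (hinj : Function.Injective x)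
    (hC : ({x 0, x 1, x 2} : Clause) ∈ F)
    (hsing : ∀ i, ldeg F (x i) = 1) :
    (∀ D ∈ F, ∀ i j : Fin 3, i ≠ j → ¬(Lit.neg (x i) ∈ D ∧ Lit.neg (x j) ∈ D)) ∧
    (∀ i, 3 ≤ ldeg F (Lit.neg (x i))) := by
  have aPart : ∀ D ∈ F, ∀ i j : Fin 3, i ≠ j →
      ¬(Lit.neg (x i) ∈ D ∧ Lit.neg (x j) ∈ D) := by
    intro D hD i j hij hmem
    obtain ⟨h1, h2⟩ := hmem
    have key : ∀ k : Fin 3, ({x i, x j, x k} : Clause) = {x 0, x 1, x 2} → False := fun k hk =>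
      blocked q F hF hunsat hmin (x i) (x j) (x k) (hk ▸ hC) (hinj.ne hij) (hsing i) D hD h1 h2
    fin_cases i <;> fin_cases j <;>
      first
        | exact hij rfl
        | (apply key 0; ext l; simp; tauto)
        | (apply key 1; ext l; simp; tauto)
        | (apply key 2; ext l; simp; tauto)
  have keyB : ∀ i j k : Fin 3, i ≠ j → i ≠ k → j ≠ k →
      ({x i, x j, x k} : Clause) = {x 0, x 1, x 2} → ldeg F (Lit.neg (x i)) ≤ 2 → False := by
    intro i j k hij hik hjk hset hld
    refine partB q hq F hF hunsat hmin (x i) (x j) (x k) (hset ▸ hC) (hinj.ne hij)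
      (hinj.ne hik) (hinj.ne hjk) (hsing i) (hsing j) (hsing k) ?_ hld
    intro D hD hnD
    exact ⟨fun hb => aPart D hD i j hij ⟨hnD, hb⟩, fun hc => aPart D hD i k hik ⟨hnD, hc⟩⟩
  refine ⟨aPart, ?_⟩
  intro i
  by_contra hcon
  have hld : ldeg F (Lit.neg (x i)) ≤ 2 := by omega
  fin_cases i
  · exact keyB 0 1 2 (by decide) (by decide) (by decide) rfl hld
  · exact keyB 1 0 2 (by decide) (by decide) (by decide) (by ext l; simp; tauto) hld
  · exact keyB 2 0 1 (by decide) (by decide) (by decide) (by ext l; simp; tauto) hld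
end

section
/- If F is an unsatisfiable (3,4)-formula, then there exists an unsatisfiable (3,4)-formula F' with |F'| ≤ |F| that contains at most one variable of degree 2. -/
-- auxiliary development

lemma vdeg_mono {F F' : CNF} (h : F' ⊆ F) (v : ℕ) : vdeg F' v ≤ vdeg F v := by
  unfold vdeg occ
  apply Finset.card_le_card
  intro C hC
  simp only [Finset.mem_filter] at *
  exact ⟨h hC.1, hC.2⟩

lemma mem_vars_of_vdeg_pos {F : CNF} {v : ℕ} (h : 0 < vdeg F v) : v ∈ vars F := by
  unfold vdeg occ at h
  obtain ⟨C, hC⟩ := Finset.card_pos.mp h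
  simp only [Finset.mem_filter] at hC
  refine Finset.mem_sup.mpr ⟨C, hC.1, ?_⟩
  rcases hC.2 with h' | h' <;> exact Finset.mem_image.mpr ⟨_, h', rfl⟩

lemma ldeg_add_le {F : CNF} (hK : ∀ C ∈ F, Clause.nontaut C) (v : ℕ) :
    ldeg F (v, true) + ldeg F (v, false) ≤ vdeg F v := by
  unfold ldeg vdeg occ
  rw [← Finset.card_union_of_disjoint]
  · apply Finset.card_le_card
    intro C hC
    simp only [Finset.mem_union, Finset.mem_filter] at *
    rcases hC with h | h
    · exact ⟨h.1, Or.inl h.2⟩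
    · exact ⟨h.1, Or.inr h.2⟩
  · rw [Finset.disjoint_left]
    intro C h1 h2
    simp only [Finset.mem_filter] at h1 h2
    exact hK C h1.1 (v, true) h1.2 h2.2

lemma card_vars_le {F : CNF} (hK : isKCNF 3 F) : (vars F).card ≤ 3 * F.card := by
  unfold vars
  rw [Finset.sup_eq_biUnion]
  calc (F.biUnion fun C => C.image Prod.fst).card
      ≤ ∑ C ∈ F, (C.image Prod.fst).card := Finset.card_biUnion_le
    _ ≤ ∑ C ∈ F, 3 := by
        apply Finset.sum_le_sum
        intro C hC
        calc (C.image Prod.fst).card ≤ C.card := Finset.card_image_le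
          _ = 3 := (hK C hC).2
    _ = 3 * F.card := by rw [Finset.sum_const, smul_eq_mul, mul_comm]

def d2F (F : CNF) : ℕ := ((vars F).filter (fun v => vdeg F v = 2)).card

lemma d2F_le {F : CNF} (hK : isKCNF 3 F) : d2F F ≤ 3 * F.card :=
  le_trans (Finset.card_le_card (Finset.filter_subset _ _)) (card_vars_le hK)

lemma mu_lt_of_card_lt {F F' : CNF} (hK' : isKCNF 3 F') (h : F'.card < F.card) :
    4 * F'.card ^ 2 + d2F F' < 4 * F.card ^ 2 + d2F F := by
  have h1 : d2F F' ≤ 3 * F'.card := d2F_le hK'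
  nlinarith [Nat.zero_le (d2F F)]

lemma satClause_of_not_nontaut (τ : ℕ → Bool) {C : Clause} (h : ¬ Clause.nontaut C) :
    satClause τ C := by
  unfold Clause.nontaut at h
  push_neg at h
  obtain ⟨l, hl, hnl⟩ := h
  by_cases h' : τ l.1 = l.2
  · exact ⟨l, hl, h'⟩
  · refine ⟨Lit.neg l, hnl, ?_⟩
    simp only [Lit.neg]
    cases h2 : τ l.1 <;> cases h3 : l.2 <;> simp_all

-- substitution y ↦ (x, · xor s)

def subL (x y : ℕ) (s : Bool) (l : Lit) : Lit := if l.1 = y then (x, xor l.2 s) else l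

def subC (x y : ℕ) (s : Bool) (C : Clause) : Clause := C.image (subL x y s)

def subF (x y : ℕ) (s : Bool) (F : CNF) : CNF :=
  (F.image (subC x y s)).filter Clause.nontaut

def GoodS (F : CNF) (x y : ℕ) (s : Bool) : Prop :=
  ∀ C ∈ F, ∀ c d : Bool, (y, c) ∈ C → (x, d) ∈ C → xor c s ≠ d

lemma mem_subC_other {x y v : ℕ} (hv1 : v ≠ x) (hv2 : v ≠ y) (s : Bool) (c : Bool)
    (C : Clause) : (v, c) ∈ subC x y s C ↔ (v, c) ∈ C := by
  unfold subC
  constructor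
  · intro h
    obtain ⟨l, hl, heq⟩ := Finset.mem_image.mp h
    unfold subL at heq
    by_cases h' : l.1 = y
    · simp [h'] at heq
      exact absurd heq.1.symm hv1
    · simp [h'] at heq
      rwa [← heq]
  · intro h
    refine Finset.mem_image.mpr ⟨(v, c), h, ?_⟩
    unfold subL
    simp [hv2]

lemma notMem_subC_y {x y : ℕ} (hxy : x ≠ y) (s c : Bool) (C : Clause) :
    (y, c) ∉ subC x y s C := by
  intro h
  obtain ⟨l, hl, heq⟩ := Finset.mem_image.mp h
  unfold subL at heq
  by_cases h' : l.1 = y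
  · simp [h'] at heq
    exact hxy heq.1
  · simp [h'] at heq
    exact h' (by rw [heq])

lemma mem_subC_x {x y : ℕ} (hxy : x ≠ y) (s d : Bool) (C : Clause) :
    (x, d) ∈ subC x y s C ↔ (x, d) ∈ C ∨ (y, xor d s) ∈ C := by
  unfold subC
  constructor
  · intro h
    obtain ⟨l, hl, heq⟩ := Finset.mem_image.mp h
    unfold subL at heq
    by_cases h' : l.1 = y
    · rw [if_pos h'] at heq
      rw [Prod.ext_iff] at heq
      right
      have : l = (y, xor d s) := by
        rw [Prod.ext_iff]
        refine ⟨h', ?_⟩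
        have h2 := heq.2
        simp only at h2
        cases s <;> cases d <;> cases hl2 : l.2 <;> simp_all
      rwa [← this]
    · rw [if_neg h'] at heq
      left; rwa [← heq]
  · rintro (h | h)
    · refine Finset.mem_image.mpr ⟨(x, d), h, ?_⟩
      unfold subL; simp [hxy]
    · refine Finset.mem_image.mpr ⟨(y, xor d s), h, ?_⟩
      unfold subL
      simp only [if_pos]
      cases s <;> cases d <;> simp

lemma unsat_subF {F : CNF} {x y : ℕ} {s : Bool} (hxy : x ≠ y)
    (h : ¬ Satisfiable F) : ¬ Satisfiable (subF x y s F) := by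
  intro ⟨τ, hτ⟩
  apply h
  refine ⟨fun v => if v = y then xor (τ x) s else τ v, ?_⟩
  intro C hC
  have hsatC : satClause τ (subC x y s C) := by
    by_cases hnt : Clause.nontaut (subC x y s C)
    · apply hτ
      unfold subF
      exact Finset.mem_filter.mpr ⟨Finset.mem_image_of_mem _ hC, hnt⟩
    · exact satClause_of_not_nontaut τ hnt
  obtain ⟨l', hl', hsat⟩ := hsatC
  obtain ⟨l, hl, heq⟩ := Finset.mem_image.mp hl'
  by_cases h' : l.1 = y
  · refine ⟨l, hl, ?_⟩
    unfold subL at heq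
    rw [if_pos h'] at heq
    rw [← heq] at hsat
    simp only at hsat
    simp only [h', if_pos]
    rw [hsat]
    cases s <;> cases l.2 <;> simp
  · unfold subL at heq
    rw [if_neg h'] at heq
    subst heq
    refine ⟨l, hl, ?_⟩
    simp only [if_neg h']
    exact hsat

lemma card_subC {x y : ℕ} {s : Bool} {C : Clause} (hxy : x ≠ y)
    (hC : Clause.nontaut C)
    (hCgood : ∀ c d : Bool, (y, c) ∈ C → (x, d) ∈ C → xor c s ≠ d) :
    (subC x y s C).card = C.card := by
  unfold subC
  apply Finset.card_image_of_injOn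
  intro l1 h1 l2 h2 heq
  unfold subL at heq
  by_cases e1 : l1.1 = y <;> by_cases e2 : l2.1 = y
  · rw [if_pos e1, if_pos e2] at heq
    rw [Prod.ext_iff] at heq
    have h2' := heq.2
    simp only at h2'
    apply Prod.ext (e1.trans e2.symm)
    cases s <;> cases hb1 : l1.2 <;> cases hb2 : l2.2 <;> simp_all
  · rw [if_pos e1, if_neg e2] at heq
    exfalso
    have hy : (y, l1.2) ∈ C := by rw [← e1] at *; exact h1
    have hx : (x, xor l1.2 s) ∈ C := by rw [heq]; exact h2
    exact hCgood l1.2 (xor l1.2 s) hy hx rfl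
  · rw [if_neg e1, if_pos e2] at heq
    exfalso
    have hy : (y, l2.2) ∈ C := by rw [← e2] at *; exact h2
    have hx : (x, xor l2.2 s) ∈ C := by rw [← heq]; exact h1
    exact hCgood l2.2 (xor l2.2 s) hy hx rfl
  · rw [if_neg e1, if_neg e2] at heq
    exact heq

lemma isKCNF_subF {F : CNF} {x y : ℕ} {s : Bool} (hxy : x ≠ y)
    (hK : isKCNF 3 F) (hgood : GoodS F x y s) : isKCNF 3 (subF x y s F) := by
  intro C' hC'
  unfold subF at hC'
  rw [Finset.mem_filter] at hC'
  obtain ⟨C, hC, rfl⟩ := Finset.mem_image.mp hC'.1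
  refine ⟨hC'.2, ?_⟩
  rw [card_subC hxy (hK C hC).1 (fun c d => hgood C hC c d)]
  exact (hK C hC).2

lemma card_subF_le {F : CNF} {x y : ℕ} {s : Bool} : (subF x y s F).card ≤ F.card :=
  le_trans (Finset.card_filter_le _ _) Finset.card_image_le

lemma occ_subF_subset_other {F : CNF} {x y v : ℕ} {s : Bool}
    (hv1 : v ≠ x) (hv2 : v ≠ y) :
    occ (subF x y s F) v ⊆ (occ F v).image (subC x y s) := by
  intro C' hC'
  rw [occ, Finset.mem_filter] at hC'
  obtain ⟨hC'1, hC'2⟩ := hC'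
  unfold subF at hC'1
  rw [Finset.mem_filter] at hC'1
  obtain ⟨C, hC, rfl⟩ := Finset.mem_image.mp hC'1.1
  refine Finset.mem_image.mpr ⟨C, ?_, rfl⟩
  rw [occ, Finset.mem_filter]
  refine ⟨hC, ?_⟩
  rcases hC'2 with h | h
  · exact Or.inl ((mem_subC_other hv1 hv2 s true C).mp h)
  · exact Or.inr ((mem_subC_other hv1 hv2 s false C).mp h)

lemma vdeg_subF_other {F : CNF} {x y v : ℕ} {s : Bool} (hv1 : v ≠ x) (hv2 : v ≠ y) :
    vdeg (subF x y s F) v ≤ vdeg F v :=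
  le_trans (Finset.card_le_card (occ_subF_subset_other hv1 hv2)) Finset.card_image_le

lemma vdeg_subF_y {F : CNF} {x y : ℕ} {s : Bool} (hxy : x ≠ y) :
    vdeg (subF x y s F) y = 0 := by
  rw [vdeg, Finset.card_eq_zero]
  rw [Finset.eq_empty_iff_forall_notMem]
  intro C' hC'
  rw [occ, Finset.mem_filter] at hC'
  obtain ⟨hC'1, hC'2⟩ := hC'
  unfold subF at hC'1
  rw [Finset.mem_filter] at hC'1
  obtain ⟨C, hC, rfl⟩ := Finset.mem_image.mp hC'1.1
  rcases hC'2 with h | h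
  · exact notMem_subC_y hxy s true C h
  · exact notMem_subC_y hxy s false C h

lemma occ_subF_subset_x {F : CNF} {x y : ℕ} {s : Bool} (hxy : x ≠ y) :
    occ (subF x y s F) x ⊆ (occ F x ∪ occ F y).image (subC x y s) := by
  intro C' hC'
  rw [occ, Finset.mem_filter] at hC'
  obtain ⟨hC'1, hC'2⟩ := hC'
  unfold subF at hC'1
  rw [Finset.mem_filter] at hC'1
  obtain ⟨C, hC, rfl⟩ := Finset.mem_image.mp hC'1.1
  refine Finset.mem_image.mpr ⟨C, ?_, rfl⟩
  rw [Finset.mem_union, occ, occ, Finset.mem_filter, Finset.mem_filter]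
  have key : ∀ d : Bool, (x, d) ∈ subC x y s C →
      (C ∈ F ∧ ((x, true) ∈ C ∨ (x, false) ∈ C)) ∨
      (C ∈ F ∧ ((y, true) ∈ C ∨ (y, false) ∈ C)) := by
    intro d hd
    rcases (mem_subC_x hxy s d C).mp hd with h | h
    · refine Or.inl ⟨hC, ?_⟩
      cases d
      · exact Or.inr h
      · exact Or.inl h
    · refine Or.inr ⟨hC, ?_⟩
      cases hds : xor d s
      · rw [hds] at h; exact Or.inr h
      · rw [hds] at h; exact Or.inl h
  rcases hC'2 with h | h
  · exact key true h
  · exact key false h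

lemma vdeg_subF_x {F : CNF} {x y : ℕ} {s : Bool} (hxy : x ≠ y) :
    vdeg (subF x y s F) x ≤ vdeg F x + vdeg F y := by
  calc vdeg (subF x y s F) x
      ≤ ((occ F x ∪ occ F y).image (subC x y s)).card :=
        Finset.card_le_card (occ_subF_subset_x hxy)
    _ ≤ (occ F x ∪ occ F y).card := Finset.card_image_le
    _ ≤ vdeg F x + vdeg F y := Finset.card_union_le _ _

lemma exists_goodS {F : CNF} {x y : ℕ} (hK : isKCNF 3 F)
    (hx : vdeg F x = 2) (hy : vdeg F y = 2)
    (hxp : ldeg F (x, true) ≠ 0) (hxn : ldeg F (x, false) ≠ 0)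
    (hyp : ldeg F (y, true) ≠ 0) (hyn : ldeg F (y, false) ≠ 0) :
    ∃ s : Bool, GoodS F x y s := by
  by_contra h
  push_neg at h
  unfold GoodS at h
  have h1 := h true
  have h2 := h false
  push_neg at h1 h2
  obtain ⟨C1, hC1, c1, d1, hy1, hx1, he1⟩ := h1
  obtain ⟨C2, hC2, c2, d2, hy2, hx2, he2⟩ := h2
  have hx1' : (x, !c1) ∈ C1 := by
    have hd1 : d1 = !c1 := by rw [← he1, Bool.xor_true]
    rwa [hd1] at hx1
  have hx2' : (x, c2) ∈ C2 := by
    have hd2 : d2 = c2 := by rw [← he2, Bool.xor_false]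
    rwa [hd2] at hx2
  have hne : C1 ≠ C2 := by
    rintro rfl
    by_cases hc : c1 = c2
    · rw [hc] at hx1'
      exact (hK C1 hC1).1 (x, c2) hx2' (by simpa [Lit.neg] using hx1')
    · have hcc : c2 = !c1 := by revert hc; cases c1 <;> cases c2 <;> simp
      rw [hcc] at hy2
      exact (hK C1 hC1).1 (y, c1) hy1 (by simpa [Lit.neg] using hy2)
  have hsum_y := ldeg_add_le (fun C hC => (hK C hC).1) y
  have hsum_x := ldeg_add_le (fun C hC => (hK C hC).1) x
  rw [hy] at hsum_y
  rw [hx] at hsum_x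
  by_cases hc : c1 = c2
  · -- same y-literal appears in two distinct clauses
    rw [← hc] at hy2
    have hge : 2 ≤ ldeg F (y, c1) := by
      rw [ldeg]
      apply Finset.one_lt_card.mpr
      exact ⟨C1, Finset.mem_filter.mpr ⟨hC1, hy1⟩, C2, Finset.mem_filter.mpr ⟨hC2, hy2⟩, hne⟩
    have hge' : 1 ≤ ldeg F (y, !c1) := by
      rw [Nat.one_le_iff_ne_zero]
      cases c1
      · simpa using hyp
      · simpa using hyn
    cases c1
    · simp only [Bool.not_false] at hge'
      omega
    · simp only [Bool.not_true] at hge'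
      omega
  · -- same x-literal appears in two distinct clauses
    have hcc : c2 = !c1 := by revert hc; cases c1 <;> cases c2 <;> simp
    rw [hcc] at hx2'
    have hge : 2 ≤ ldeg F (x, !c1) := by
      rw [ldeg]
      apply Finset.one_lt_card.mpr
      exact ⟨C1, Finset.mem_filter.mpr ⟨hC1, hx1'⟩, C2, Finset.mem_filter.mpr ⟨hC2, hx2'⟩, hne⟩
    have hge' : 1 ≤ ldeg F (x, c1) := by
      rw [Nat.one_le_iff_ne_zero]
      cases c1
      · simpa using hxn
      · simpa using hxp
    cases c1
    · simp only [Bool.not_false] at hge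
      omega
    · simp only [Bool.not_true] at hge
      omega

def delF (F : CNF) (x : ℕ) : CNF := F.filter (fun C => (x, true) ∉ C ∧ (x, false) ∉ C)

lemma delF_subset {F : CNF} {x : ℕ} : delF F x ⊆ F := Finset.filter_subset _ _

lemma unsat_delF {F : CNF} {x : ℕ} {d : Bool} (hpure : ldeg F (x, !d) = 0)
    (h : ¬ Satisfiable F) : ¬ Satisfiable (delF F x) := by
  intro ⟨τ, hτ⟩
  apply h
  refine ⟨Function.update τ x d, ?_⟩
  intro C hC
  by_cases hx : (x, true) ∈ C ∨ (x, false) ∈ C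
  · have hxd : (x, d) ∈ C := by
      have hnot : (x, !d) ∉ C := by
        intro hmem
        have : C ∈ F.filter (fun C => (x, !d) ∈ C) := Finset.mem_filter.mpr ⟨hC, hmem⟩
        rw [ldeg, Finset.card_eq_zero] at hpure
        rw [hpure] at this
        exact absurd this (Finset.notMem_empty C)
      cases d <;> rcases hx with h' | h' <;> simp_all
    exact ⟨(x, d), hxd, by simp [Function.update]⟩
  · push_neg at hx
    obtain ⟨l, hl, hsat⟩ := hτ C (Finset.mem_filter.mpr ⟨hC, hx⟩)
    refine ⟨l, hl, ?_⟩
    have hlx : l.1 ≠ x := by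
      intro heq
      have : l = (x, l.2) := Prod.ext heq rfl
      rw [this] at hl
      cases hb : l.2
      · rw [hb] at hl; exact hx.2 hl
      · rw [hb] at hl; exact hx.1 hl
    rw [Function.update_of_ne hlx]
    exact hsat

lemma delF_card_lt {F : CNF} {x : ℕ} (hx : vdeg F x = 2) : (delF F x).card < F.card := by
  apply Finset.card_lt_card
  rw [Finset.ssubset_iff_of_subset delF_subset]
  have : 0 < vdeg F x := by omega
  rw [vdeg, Finset.card_pos] at this
  obtain ⟨C, hC⟩ := this
  rw [occ, Finset.mem_filter] at hC
  refine ⟨C, hC.1, ?_⟩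
  rw [delF, Finset.mem_filter]
  push_neg
  intro _ h
  rcases hC.2 with h' | h'
  · exact absurd h' h
  · exact h'


lemma d2F_lt {F : CNF} {x y : ℕ} {s : Bool} (hxy : x ≠ y) (hK : isKCNF 3 F)
    (hgood : GoodS F x y s) (hx : vdeg F x = 2) (hy : vdeg F y = 2)
    (hcard : (subF x y s F).card = F.card) :
    d2F (subF x y s F) < d2F F := by
  have hsub1 : subF x y s F ⊆ F.image (subC x y s) := Finset.filter_subset _ _
  have himg : (F.image (subC x y s)).card = F.card := by
    have h1 : (subF x y s F).card ≤ (F.image (subC x y s)).card :=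
      Finset.card_le_card hsub1
    have h2 : (F.image (subC x y s)).card ≤ F.card := Finset.card_image_le
    omega
  have hinj : Set.InjOn (subC x y s) F := Finset.card_image_iff.mp himg
  have hFeq : subF x y s F = F.image (subC x y s) :=
    Finset.eq_of_subset_of_card_le hsub1 (by rw [hcard, himg])
  have hnt : ∀ C ∈ F, Clause.nontaut (subC x y s C) := by
    intro C hC
    have : subC x y s C ∈ subF x y s F := by
      rw [hFeq]; exact Finset.mem_image_of_mem _ hC
    exact (Finset.mem_filter.mp this).2
  have hdisj : Disjoint (occ F x) (occ F y) := by
    rw [Finset.disjoint_left]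
    intro C h1 h2
    rw [occ, Finset.mem_filter] at h1 h2
    obtain ⟨hCF, hx'⟩ := h1
    obtain ⟨-, hy'⟩ := h2
    obtain ⟨d, hd⟩ : ∃ d : Bool, (x, d) ∈ C := by
      rcases hx' with h | h
      exacts [⟨true, h⟩, ⟨false, h⟩]
    obtain ⟨c, hc⟩ : ∃ c : Bool, (y, c) ∈ C := by
      rcases hy' with h | h
      exacts [⟨true, h⟩, ⟨false, h⟩]
    have hne := hgood C hCF c d hc hd
    have heq : xor c s = !d := by
      cases hcs : xor c s <;> cases d <;> simp_all
    have hm1 : (x, d) ∈ subC x y s C := (mem_subC_x hxy s d C).mpr (Or.inl hd)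
    have hm2 : (x, !d) ∈ subC x y s C := by
      apply (mem_subC_x hxy s (!d) C).mpr
      right
      have : xor (!d) s = c := by
        rw [← heq]
        cases c <;> cases s <;> simp
      rwa [this]
    exact hnt C hCF (x, d) hm1 (by simpa [Lit.neg] using hm2)
  -- vdeg of x in the new formula is 4
  have hoccx : occ (subF x y s F) x = (occ F x ∪ occ F y).image (subC x y s) := by
    apply Finset.Subset.antisymm (occ_subF_subset_x hxy)
    intro C' hC'
    obtain ⟨C, hC, rfl⟩ := Finset.mem_image.mp hC'
    rw [Finset.mem_union] at hC
    rw [occ, Finset.mem_filter]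
    constructor
    · rw [hFeq]
      apply Finset.mem_image_of_mem
      rcases hC with h | h
      exacts [(Finset.mem_filter.mp h).1, (Finset.mem_filter.mp h).1]
    · rcases hC with h | h
      · rcases (Finset.mem_filter.mp h).2 with h' | h'
        · exact Or.inl ((mem_subC_x hxy s true C).mpr (Or.inl h'))
        · exact Or.inr ((mem_subC_x hxy s false C).mpr (Or.inl h'))
      · obtain ⟨c, hc⟩ : ∃ c : Bool, (y, c) ∈ C := by
          rcases (Finset.mem_filter.mp h).2 with h' | h'
          exacts [⟨true, h'⟩, ⟨false, h'⟩]
        have hm : (x, xor c s) ∈ subC x y s C := by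
          apply (mem_subC_x hxy s (xor c s) C).mpr
          right
          have : xor (xor c s) s = c := by cases c <;> cases s <;> simp
          rwa [this]
        cases hcs : xor c s
        · rw [hcs] at hm; exact Or.inr hm
        · rw [hcs] at hm; exact Or.inl hm
  have hvdx : vdeg (subF x y s F) x = 4 := by
    rw [vdeg, hoccx, Finset.card_image_of_injOn, Finset.card_union_of_disjoint hdisj]
    · rw [← vdeg, ← vdeg, hx, hy]
    · apply Set.InjOn.mono _ hinj
      intro C hC
      simp only [Finset.coe_union, Set.mem_union, Finset.mem_coe] at hC
      rcases hC with h | h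
      exacts [Finset.mem_coe.mpr ((Finset.filter_subset _ _) h),
              Finset.mem_coe.mpr ((Finset.filter_subset _ _) h)]
  -- vdeg is preserved for other variables
  have hvdo : ∀ v : ℕ, v ≠ x → v ≠ y → vdeg (subF x y s F) v = vdeg F v := by
    intro v hv1 hv2
    have hocc : occ (subF x y s F) v = (occ F v).image (subC x y s) := by
      apply Finset.Subset.antisymm (occ_subF_subset_other hv1 hv2)
      intro C' hC'
      obtain ⟨C, hC, rfl⟩ := Finset.mem_image.mp hC'
      rw [occ, Finset.mem_filter] at hC ⊢
      constructor
      · rw [hFeq]; exact Finset.mem_image_of_mem _ hC.1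
      · rcases hC.2 with h | h
        · exact Or.inl ((mem_subC_other hv1 hv2 s true C).mpr h)
        · exact Or.inr ((mem_subC_other hv1 hv2 s false C).mpr h)
    rw [vdeg, hocc, Finset.card_image_of_injOn, ← vdeg]
    apply Set.InjOn.mono _ hinj
    intro C hC
    exact Finset.mem_coe.mpr ((Finset.filter_subset _ _) (Finset.mem_coe.mp hC))
  -- now compare the degree-2 sets
  unfold d2F
  apply Finset.card_lt_card
  rw [Finset.ssubset_iff_of_subset]
  · refine ⟨y, ?_, ?_⟩
    · rw [Finset.mem_filter]
      exact ⟨mem_vars_of_vdeg_pos (by omega), hy⟩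
    · rw [Finset.mem_filter]
      rintro ⟨-, h⟩
      rw [vdeg_subF_y hxy] at h
      omega
  · intro v hv
    rw [Finset.mem_filter] at hv ⊢
    obtain ⟨hv1, hv2⟩ := hv
    have hvx : v ≠ x := by rintro rfl; rw [hvdx] at hv2; omega
    have hvy : v ≠ y := by rintro rfl; rw [vdeg_subF_y hxy] at hv2; omega
    rw [hvdo v hvx hvy] at hv2
    exact ⟨mem_vars_of_vdeg_pos (by omega), hv2⟩

lemma main_aux : ∀ n : ℕ, ∀ F : CNF, 4 * F.card ^ 2 + d2F F ≤ n → KS 3 4 F →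
    ¬ Satisfiable F →
    ∃ F' : CNF, KS 3 4 F' ∧ ¬ Satisfiable F' ∧ F'.card ≤ F.card ∧
      ∀ v w : ℕ, vdeg F' v = 2 → vdeg F' w = 2 → v = w := by
  intro n
  induction n using Nat.strong_induction_on with
  | _ n ih =>
  intro F hn hF hunsat
  by_cases hdone : ∀ v w : ℕ, vdeg F v = 2 → vdeg F w = 2 → v = w
  · exact ⟨F, hF, hunsat, le_refl _, hdone⟩
  push_neg at hdone
  obtain ⟨v, w, hv, hw, hvw⟩ := hdone
  by_cases hpure : ∃ (z : ℕ) (d : Bool), vdeg F z = 2 ∧ ldeg F (z, !d) = 0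
  · obtain ⟨z, d, hz, hpz⟩ := hpure
    have hK' : KS 3 4 (delF F z) :=
      ⟨fun C hC => hF.1 C (delF_subset hC),
       fun u => le_trans (vdeg_mono delF_subset u) (hF.2 u)⟩
    have hcard' : (delF F z).card < F.card := delF_card_lt hz
    have hmu : 4 * (delF F z).card ^ 2 + d2F (delF F z) < n :=
      lt_of_lt_of_le (mu_lt_of_card_lt hK'.1 hcard') hn
    obtain ⟨F'', h1, h2, h3, h4⟩ :=
      ih _ hmu (delF F z) (le_refl _) hK' (unsat_delF hpz hunsat)
    exact ⟨F'', h1, h2, le_trans h3 (le_of_lt hcard'), h4⟩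
  · push_neg at hpure
    have hvp : ldeg F (v, true) ≠ 0 := by simpa using hpure v false hv
    have hvn : ldeg F (v, false) ≠ 0 := by simpa using hpure v true hv
    have hwp : ldeg F (w, true) ≠ 0 := by simpa using hpure w false hw
    have hwn : ldeg F (w, false) ≠ 0 := by simpa using hpure w true hw
    obtain ⟨s, hs⟩ := exists_goodS hF.1 hv hw hvp hvn hwp hwn
    have hK' : KS 3 4 (subF v w s F) := by
      refine ⟨isKCNF_subF hvw hF.1 hs, ?_⟩
      intro u
      by_cases hu1 : u = v
      · subst hu1
        calc vdeg (subF u w s F) u ≤ vdeg F u + vdeg F w := vdeg_subF_x hvw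
          _ ≤ 4 := by rw [hv, hw]
      · by_cases hu2 : u = w
        · subst hu2
          rw [vdeg_subF_y hvw]
          omega
        · exact le_trans (vdeg_subF_other hu1 hu2) (hF.2 u)
    have hunsat' : ¬ Satisfiable (subF v w s F) := unsat_subF hvw hunsat
    have hcardle : (subF v w s F).card ≤ F.card := card_subF_le
    have hmu : 4 * (subF v w s F).card ^ 2 + d2F (subF v w s F) < n := by
      rcases lt_or_eq_of_le hcardle with hlt | heq
      · exact lt_of_lt_of_le (mu_lt_of_card_lt hK'.1 hlt) hn
      · have hd2 := d2F_lt hvw hF.1 hs hv hw heq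
        calc 4 * (subF v w s F).card ^ 2 + d2F (subF v w s F)
            < 4 * F.card ^ 2 + d2F F := by rw [heq]; omega
          _ ≤ n := hn
    obtain ⟨F'', h1, h2, h3, h4⟩ :=
      ih _ hmu (subF v w s F) (le_refl _) hK' hunsat'
    exact ⟨F'', h1, h2, le_trans h3 hcardle, h4⟩

theorem stmt12 (F : CNF) (hF : KS 3 4 F) (hunsat : ¬ Satisfiable F) :
    ∃ F' : CNF, KS 3 4 F' ∧ ¬ Satisfiable F' ∧ F'.card ≤ F.card ∧
      ∀ v w : ℕ, vdeg F' v = 2 → vdeg F' w = 2 → v = w :=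
  main_aux (4 * F.card ^ 2 + d2F F) F (le_refl _) hF hunsat
end

section
/- In a minimum-size unsatisfiable (3,4)-formula F, for every variable y of degree 2, the two clauses containing y have the form {y,a,b} and {¬y,a,b} for some literals a,b; that is, the two clauses agree on all literals other than y and ¬y. -/
/-! Auxiliary lemmas -/

lemma satClause_update {τ : ℕ → Bool} {C : Clause} {y : ℕ} {v : Bool}
    (h : ∀ c, (y, c) ∉ C) (hs : satClause τ C) : satClause (Function.update τ y v) C := by
  obtain ⟨l, hl, hτ⟩ := hs
  refine ⟨l, hl, ?_⟩
  have hne : l.1 ≠ y := by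
    intro he
    exact h l.2 (by rw [← he]; exact hl)
  rw [Function.update_of_ne hne]; exact hτ

lemma KS_subset {k s : ℕ} {F G : CNF} (hGF : G ⊆ F) (h : KS k s F) : KS k s G :=
  ⟨fun C hC => h.1 C (hGF hC),
   fun v => le_trans (Finset.card_le_card (Finset.filter_subset_filter _ hGF)) (h.2 v)⟩

lemma no_pure (F : CNF) (hunsat : ¬ Satisfiable F)
    (hmin : ∀ G : CNF, KS 3 4 G → ¬ Satisfiable G → F.card ≤ G.card)
    (hF : KS 3 4 F)
    (y : ℕ) (b : Bool) (hb : ∀ C ∈ F, (y, b) ∉ C)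
    (C0 : Clause) (hC0 : C0 ∈ F) (hC0y : (y, !b) ∈ C0) : False := by
  set G := F.filter (fun C => (y, !b) ∉ C) with hG
  have hGF : G ⊆ F := Finset.filter_subset _ _
  have hGunsat : ¬ Satisfiable G := by
    rintro ⟨τ, hτ⟩
    apply hunsat
    refine ⟨Function.update τ y (!b), fun C hC => ?_⟩
    by_cases hyc : (y, !b) ∈ C
    · exact ⟨(y, !b), hyc, by simp⟩
    · have hCG : C ∈ G := Finset.mem_filter.mpr ⟨hC, hyc⟩
      apply satClause_update ?_ (hτ C hCG)
      intro c hc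
      have : c = b ∨ c = !b := by cases c <;> cases b <;> simp
      rcases this with rfl | rfl
      · exact hb C hC hc
      · exact hyc hc
  have hlt : G.card < F.card := by
    apply Finset.card_lt_card
    refine ⟨hGF, fun hsub => ?_⟩
    have := Finset.mem_filter.mp (hsub hC0)
    exact this.2 hC0y
  exact absurd (hmin G (KS_subset hGF hF) hGunsat) (not_le.mpr hlt)

lemma bool_eq_not {a b : Bool} (h : ¬ a = b) : a = !b := by
  cases a <;> cases b <;> simp_all

lemma lit_neg_ne (l : Lit) : Lit.neg l ≠ l := by
  intro h
  have := congrArg Prod.snd h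
  simp [Lit.neg] at this

lemma main_case (F : CNF) (hF : KS 3 4 F) (hunsat : ¬ Satisfiable F)
    (hmin : ∀ G : CNF, KS 3 4 G → ¬ Satisfiable G → F.card ≤ G.card)
    (y : ℕ) (C1 C2 : Clause) (hne : C1 ≠ C2) (hC1F : C1 ∈ F) (hC2F : C2 ∈ F)
    (h1 : (y, true) ∈ C1) (h2 : (y, false) ∈ C2)
    (honly : ∀ C ∈ F, C ≠ C1 → C ≠ C2 → ∀ c, (y, c) ∉ C) :
    ∃ a b : Lit, ({(y, true), a, b} : Clause) ∈ F ∧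
      ({(y, false), a, b} : Clause) ∈ F := by
  have hnt1 : Clause.nontaut C1 := (hF.1 C1 hC1F).1
  have hnt2 : Clause.nontaut C2 := (hF.1 C2 hC2F).1
  have hn1 : (y, false) ∉ C1 := by
    have := hnt1 (y, true) h1
    simpa [Lit.neg] using this
  have hn2 : (y, true) ∉ C2 := by
    have := hnt2 (y, false) h2
    simpa [Lit.neg] using this
  set A := C1.erase (y, true) with hAdef
  set B := C2.erase (y, false) with hBdef
  have hAC1 : A ⊆ C1 := Finset.erase_subset _ _
  have hBC2 : B ⊆ C2 := Finset.erase_subset _ _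
  have hAcard : A.card = 2 := by
    rw [hAdef, Finset.card_erase_of_mem h1, (hF.1 C1 hC1F).2]
  have hBcard : B.card = 2 := by
    rw [hBdef, Finset.card_erase_of_mem h2, (hF.1 C2 hC2F).2]
  have hyA : ∀ c, (y, c) ∉ A := by
    intro c hc
    cases c
    · exact hn1 (hAC1 hc)
    · exact (Finset.ne_of_mem_erase hc) rfl
  have hyB : ∀ c, (y, c) ∉ B := by
    intro c hc
    cases c
    · exact (Finset.ne_of_mem_erase hc) rfl
    · exact hn2 (hBC2 hc)
  have hC1eq : C1 = insert (y, true) A := (Finset.insert_erase h1).symm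
  have hC2eq : C2 = insert (y, false) B := (Finset.insert_erase h2).symm
  by_cases hAB : A = B
  · obtain ⟨a, b, hab, hA⟩ := Finset.card_eq_two.mp hAcard
    refine ⟨a, b, ?_, ?_⟩
    · have : ({(y, true), a, b} : Clause) = C1 := by rw [hC1eq, hA]
      rwa [this]
    · have : ({(y, false), a, b} : Clause) = C2 := by rw [hC2eq, ← hAB, hA]
      rwa [this]
  · exfalso
    -- the two clauses don't agree off y; get a smaller unsatisfiable formula
    have hE : ∀ C, C ∈ (F.erase C1).erase C2 ↔ (C ∈ F ∧ C ≠ C1 ∧ C ≠ C2) := by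
      intro C
      simp only [Finset.mem_erase]
      tauto
    -- any clause in the erased part has no y-literal
    have hEy : ∀ C ∈ (F.erase C1).erase C2, ∀ c, (y, c) ∉ C := by
      intro C hC
      obtain ⟨hCF, hC1', hC2'⟩ := (hE C).mp hC
      exact honly C hCF hC1' hC2'
    by_cases hcross : ∃ l ∈ A, Lit.neg l ∈ B
    · -- resolvent is tautological: F minus the two clauses is already unsat
      obtain ⟨l, hlA, hlB⟩ := hcross
      set G := (F.erase C1).erase C2 with hGdef
      have hGF : G ⊆ F := fun C hC => ((hE C).mp hC).1
      have hly : l.1 ≠ y := by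
        intro h
        exact hyA l.2 (by rw [← h]; exact hlA)
      have hGunsat : ¬ Satisfiable G := by
        rintro ⟨τ, hτ⟩
        apply hunsat
        by_cases hsl : τ l.1 = l.2
        · refine ⟨Function.update τ y false, fun C hC => ?_⟩
          by_cases e1 : C = C1
          · exact ⟨l, e1 ▸ hAC1 hlA, by rw [Function.update_of_ne hly]; exact hsl⟩
          by_cases e2 : C = C2
          · exact ⟨(y, false), e2 ▸ h2, by simp⟩
          · exact satClause_update (honly C hC e1 e2) (hτ C ((hE C).mpr ⟨hC, e1, e2⟩))
        · have hsl' : τ (Lit.neg l).1 = (Lit.neg l).2 := by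
            show τ l.1 = !l.2
            exact bool_eq_not hsl
          refine ⟨Function.update τ y true, fun C hC => ?_⟩
          by_cases e2 : C = C2
          · refine ⟨Lit.neg l, e2 ▸ hBC2 hlB, ?_⟩
            rw [Function.update_of_ne (by simpa [Lit.neg] using hly)]
            exact hsl'
          by_cases e1 : C = C1
          · exact ⟨(y, true), e1 ▸ h1, by simp⟩
          · exact satClause_update (honly C hC e1 e2) (hτ C ((hE C).mpr ⟨hC, e1, e2⟩))
      have hlt : G.card < F.card := by
        apply Finset.card_lt_card
        refine ⟨hGF, fun hsub => ?_⟩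
        exact (((hE C1).mp (hsub hC1F)).2.1) rfl
      exact absurd (hmin G (KS_subset hGF hF) hGunsat) (not_le.mpr hlt)
    · -- no complementary pair across A and B: replace C1, C2 by a 3-clause
      push_neg at hcross
      have hBA : ∃ b0 ∈ B, b0 ∉ A := by
        by_contra h
        push_neg at h
        exact hAB (Finset.eq_of_subset_of_card_le h (by omega)).symm
      obtain ⟨b0, hb0B, hb0A⟩ := hBA
      set R : Clause := insert b0 A with hRdef
      have hRcard : R.card = 3 := by
        rw [hRdef, Finset.card_insert_of_notMem hb0A, hAcard]
      have hntA : Clause.nontaut A := fun l hl h' => hnt1 l (hAC1 hl) (hAC1 h')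
      have hntR : Clause.nontaut R := by
        intro l hl h'
        rw [hRdef, Finset.mem_insert] at hl h'
        rcases hl with rfl | hl
        · rcases h' with h' | h'
          · exact lit_neg_ne l h'
          · refine hcross (Lit.neg l) h' ?_
            have : Lit.neg (Lit.neg l) = l := by simp [Lit.neg]
            rw [this]; exact hb0B
        · rcases h' with h' | h'
          · exact hcross l hl (h' ▸ hb0B)
          · exact hntA l hl h'
      have hyR : ∀ c, (y, c) ∉ R := by
        intro c hc
        rw [hRdef, Finset.mem_insert] at hc
        rcases hc with hc | hc
        · exact hyB c (hc ▸ hb0B)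
        · exact hyA c hc
      set E := (F.erase C1).erase C2 with hEdef
      set G : CNF := insert R E with hGdef
      have hb0y : b0.1 ≠ y := by
        intro h
        exact hyB b0.2 (by rw [← h]; exact hb0B)
      -- G is unsatisfiable
      have hGunsat : ¬ Satisfiable G := by
        rintro ⟨τ, hτ⟩
        apply hunsat
        have hR : satClause τ R := hτ R (Finset.mem_insert_self _ _)
        obtain ⟨l, hl, hτl⟩ := hR
        rw [hRdef, Finset.mem_insert] at hl
        rcases hl with rfl | hlA
        · -- satisfied literal is b0 ∈ B; set y := true
          refine ⟨Function.update τ y true, fun C hC => ?_⟩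
          by_cases e1 : C = C1
          · exact ⟨(y, true), e1 ▸ h1, by simp⟩
          by_cases e2 : C = C2
          · exact ⟨l, e2 ▸ hBC2 hb0B, by rw [Function.update_of_ne hb0y]; exact hτl⟩
          · exact satClause_update (honly C hC e1 e2)
              (hτ C (Finset.mem_insert_of_mem ((hE C).mpr ⟨hC, e1, e2⟩)))
        · -- satisfied literal is in A; set y := false
          have hly : l.1 ≠ y := by
            intro h
            exact hyA l.2 (by rw [← h]; exact hlA)
          refine ⟨Function.update τ y false, fun C hC => ?_⟩
          by_cases e1 : C = C1
          · exact ⟨l, e1 ▸ hAC1 hlA, by rw [Function.update_of_ne hly]; exact hτl⟩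
          by_cases e2 : C = C2
          · exact ⟨(y, false), e2 ▸ h2, by simp⟩
          · exact satClause_update (honly C hC e1 e2)
              (hτ C (Finset.mem_insert_of_mem ((hE C).mpr ⟨hC, e1, e2⟩)))
      -- G is a (3,4)-formula
      have hGKS : KS 3 4 G := by
        constructor
        · intro C hC
          rw [hGdef, Finset.mem_insert] at hC
          rcases hC with rfl | hC
          · exact ⟨hntR, hRcard⟩
          · exact hF.1 C ((hE C).mp hC).1
        · intro v
          by_cases hvR : (v, true) ∈ R ∨ (v, false) ∈ R
          · -- R contains a v-literal, coming from C1 or C2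
            have hCw : ∃ Cw, Cw ∈ occ F v ∧ (Cw = C1 ∨ Cw = C2) := by
              rcases hvR with hv | hv <;>
              · rw [hRdef, Finset.mem_insert] at hv
                rcases hv with hv | hv
                · exact ⟨C2, Finset.mem_filter.mpr ⟨hC2F, by
                    first
                    | exact Or.inl (hv ▸ hBC2 hb0B)
                    | exact Or.inr (hv ▸ hBC2 hb0B)⟩, Or.inr rfl⟩
                · exact ⟨C1, Finset.mem_filter.mpr ⟨hC1F, by
                    first
                    | exact Or.inl (hAC1 hv)
                    | exact Or.inr (hAC1 hv)⟩, Or.inl rfl⟩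
            obtain ⟨Cw, hCwocc, hCw12⟩ := hCw
            have hsub : occ G v ⊆ insert R ((occ F v).erase Cw) := by
              intro C hC
              have hC' := Finset.mem_filter.mp hC
              rw [hGdef, Finset.mem_insert] at hC'
              rcases hC'.1 with rfl | hCE
              · exact Finset.mem_insert_self _ _
              · obtain ⟨hCF, e1, e2⟩ := (hE C).mp hCE
                refine Finset.mem_insert_of_mem (Finset.mem_erase.mpr ⟨?_, ?_⟩)
                · rcases hCw12 with rfl | rfl
                  · exact e1
                  · exact e2
                · exact Finset.mem_filter.mpr ⟨hCF, hC'.2⟩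
            calc vdeg G v ≤ (insert R ((occ F v).erase Cw)).card :=
                  Finset.card_le_card hsub
              _ ≤ ((occ F v).erase Cw).card + 1 := Finset.card_insert_le _ _
              _ = (occ F v).card - 1 + 1 := by rw [Finset.card_erase_of_mem hCwocc]
              _ ≤ vdeg F v := by
                  have : 1 ≤ (occ F v).card := Finset.card_pos.mpr ⟨Cw, hCwocc⟩
                  unfold vdeg; omega
              _ ≤ 4 := hF.2 v
          · -- R has no v-literal
            have hsub : occ G v ⊆ occ F v := by
              intro C hC
              have hC' := Finset.mem_filter.mp hC
              rw [hGdef, Finset.mem_insert] at hC'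
              rcases hC'.1 with rfl | hCE
              · exact absurd hC'.2 hvR
              · exact Finset.mem_filter.mpr ⟨((hE C).mp hCE).1, hC'.2⟩
            exact le_trans (Finset.card_le_card hsub) (hF.2 v)
      -- G is strictly smaller than F
      have hlt : G.card < F.card := by
        have hEcard : E.card = F.card - 2 := by
          rw [hEdef, Finset.card_erase_of_mem (Finset.mem_erase.mpr ⟨Ne.symm hne, hC2F⟩),
            Finset.card_erase_of_mem hC1F]
          omega
        have hF2 : 2 ≤ F.card := by
          have : ({C1, C2} : CNF) ⊆ F := by
            intro C hC
            rcases Finset.mem_insert.mp hC with rfl | hC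
            · exact hC1F
            · have hc2 : C = C2 := by simpa using hC
              exact hc2 ▸ hC2F
          calc 2 = ({C1, C2} : CNF).card := (Finset.card_pair hne).symm
            _ ≤ F.card := Finset.card_le_card this
        calc G.card ≤ E.card + 1 := Finset.card_insert_le _ _
          _ = F.card - 2 + 1 := by rw [hEcard]
          _ < F.card := by omega
      exact absurd (hmin G hGKS hGunsat) (not_le.mpr hlt)

theorem stmt14 (F : CNF) (hF : KS 3 4 F) (hunsat : ¬ Satisfiable F)
    (hmin : ∀ G : CNF, KS 3 4 G → ¬ Satisfiable G → F.card ≤ G.card)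
    (y : ℕ) (hy : vdeg F y = 2) :
    ∃ a b : Lit, ({(y, true), a, b} : Clause) ∈ F ∧
      ({(y, false), a, b} : Clause) ∈ F := by
  obtain ⟨C1, C2, hne, hocc⟩ := Finset.card_eq_two.mp hy
  have hC1occ : C1 ∈ occ F y := by rw [hocc]; simp
  have hC2occ : C2 ∈ occ F y := by rw [hocc]; simp
  have hC1F : C1 ∈ F := (Finset.mem_filter.mp hC1occ).1
  have hC2F : C2 ∈ F := (Finset.mem_filter.mp hC2occ).1
  have hC1y : (y, true) ∈ C1 ∨ (y, false) ∈ C1 := (Finset.mem_filter.mp hC1occ).2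
  have hC2y : (y, true) ∈ C2 ∨ (y, false) ∈ C2 := (Finset.mem_filter.mp hC2occ).2
  have honly : ∀ C ∈ F, C ≠ C1 → C ≠ C2 → ∀ c, (y, c) ∉ C := by
    intro C hC e1 e2 c hc
    have : C ∈ occ F y := by
      refine Finset.mem_filter.mpr ⟨hC, ?_⟩
      cases c
      · exact Or.inr hc
      · exact Or.inl hc
    rw [hocc] at this
    rcases Finset.mem_insert.mp this with rfl | h
    · exact e1 rfl
    · exact e2 (by simpa using h)
  have hnt1 : Clause.nontaut C1 := (hF.1 C1 hC1F).1
  have hnt2 : Clause.nontaut C2 := (hF.1 C2 hC2F).1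
  by_cases hp1 : (y, false) ∈ C1
  · by_cases hp2 : (y, false) ∈ C2
    · -- both negative: (y, true) is "pure absent"
      exfalso
      have hb : ∀ C ∈ F, (y, true) ∉ C := by
        intro C hC hc
        by_cases e1 : C = C1
        · have hx : (y, true) ∉ C1 := by simpa [Lit.neg] using hnt1 (y, false) hp1
          exact hx (e1 ▸ hc)
        by_cases e2 : C = C2
        · have hx : (y, true) ∉ C2 := by simpa [Lit.neg] using hnt2 (y, false) hp2
          exact hx (e2 ▸ hc)
        · exact honly C hC e1 e2 true hc
      exact no_pure F hunsat hmin hF y true hb C1 hC1F (show (y, !true) ∈ C1 by simpa using hp1)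
    · -- C2 contains (y, true), C1 contains (y, false)
      have h2t : (y, true) ∈ C2 := hC2y.resolve_right hp2
      exact main_case F hF hunsat hmin y C2 C1 hne.symm hC2F hC1F h2t hp1
        (fun C hC e1 e2 => honly C hC e2 e1)
  · have h1t : (y, true) ∈ C1 := hC1y.resolve_right hp1
    by_cases hp2 : (y, false) ∈ C2
    · exact main_case F hF hunsat hmin y C1 C2 hne hC1F hC2F h1t hp2 honly
    · -- both positive: (y, false) is "pure absent"
      exfalso
      have h2t : (y, true) ∈ C2 := hC2y.resolve_right hp2
      have hb : ∀ C ∈ F, (y, false) ∉ C := by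
        intro C hC hc
        by_cases e1 : C = C1
        · exact hp1 (e1 ▸ hc)
        by_cases e2 : C = C2
        · exact hp2 (e2 ▸ hc)
        · exact honly C hC e1 e2 false hc
      exact no_pure F hunsat hmin hF y false hb C1 hC1F (show (y, !false) ∈ C1 by simpa using h1t)
end
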